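/- arXiv:1512.09161 — 3 statements merged into one kernel-verified Lean document; each statement's English description precedes it below -/
import Mathlib

section
/- Let n ≥ 2 and let α_n be an optimal set of n-means for P. Then α_n ∩ [0,1/3] ≠ ∅ and α_n ∩ [2/3,1] ≠ ∅. Moreover, for every a ∈ α_n ∩ [0,1/3] the Voronoi region M(a|α_n) contains no point of [2/3,1], and for every a ∈ α_n ∩ [2/3,1] the Voronoi region M(a|α_n) contains no point of [0,1/3]. -/
open MeasureTheory Set
open scoped ENNReal

set_option linter.unusedSectionVars false
set_option maxHeartbeats 1000000

noncomputable section

/-- The similarity map `S_j(x) = x/3^j + 1 - 1/3^(j-1)`. -/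
def Smap (j : ℕ) (x : ℝ) : ℝ := x / 3 ^ j + 1 - 1 / 3 ^ (j - 1)

/-- The similarity ratio `s_j = 3^(-j)`. -/
def srat (j : ℕ) : ℝ := (3 : ℝ)⁻¹ ^ j

/-- The probability `p_j = 2^(-j)`. -/
def prob (j : ℕ) : ℝ := (2 : ℝ)⁻¹ ^ j

/-- `J_j = S_j([0,1])`. -/
def Jset (j : ℕ) : Set ℝ := Smap j '' Set.Icc 0 1

/-- For a word `ω = ω₁⋯ω_n`, `S_ω = S_{ω₁} ∘ ⋯ ∘ S_{ω_n}`. -/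
def Sword : List ℕ → ℝ → ℝ
  | [] => id
  | j :: ω => Smap j ∘ Sword ω

/-- `s_ω = s_{ω₁} ⋯ s_{ω_n}`. -/
def sword (ω : List ℕ) : ℝ := (ω.map srat).prod

/-- `p_ω = p_{ω₁} ⋯ p_{ω_n}`. -/
def pword (ω : List ℕ) : ℝ := (ω.map prob).prod

/-- `J_ω = S_ω([0,1])`. -/
def Jword (ω : List ℕ) : Set ℝ := Sword ω '' Set.Icc 0 1

/-- `ω⁻(ω_{|ω|} + j)` : the word obtained from `ω` by increasing its last letter by `j`. -/
def wordInc (ω : List ℕ) (j : ℕ) : List ℕ := ω.dropLast ++ [ω.getLastD 1 + j]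

/-- `a(ω) = S_ω(1/2)`. -/
def aw (ω : List ℕ) : ℝ := Sword ω (1 / 2)

/-- `a(ω, ∞) = S_{ω⁻(ω_{|ω|}+1)}(1/2) + s_{ω⁻(ω_{|ω|}+1)}`. -/
def awInf (ω : List ℕ) : ℝ := Sword (wordInc ω 1) (1 / 2) + sword (wordInc ω 1)

/-- `J_{(ω,∞)} = ⋃_{j ≥ 1} J_{ω⁻(ω_{|ω|}+j)}`. -/
def JwordInf (ω : List ℕ) : Set ℝ := ⋃ j : ℕ, Jword (wordInc ω (j + 1))

/-- A (nonempty) word over the alphabet `ℕ = {1, 2, 3, …}`. -/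
def IsWord (ω : List ℕ) : Prop := ω ≠ [] ∧ ∀ i ∈ ω, 1 ≤ i

/-- The self-similarity equation `P = ∑_{j=1}^∞ 2^{-j} · P ∘ S_j^{-1}`. -/
def SelfSim (P : Measure ℝ) : Prop :=
  P = Measure.sum fun j : ℕ => ((2 : ℝ≥0∞) ^ (j + 1))⁻¹ • P.map (Smap (j + 1))

/-- The distortion error `∫ min_{a ∈ A} (x - a)² dP(x)` of a set `A` of points. -/
def err (P : Measure ℝ) (A : Set ℝ) : ℝ :=
  ∫ x, sInf ((fun a => (x - a) ^ 2) '' A) ∂P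

/-- The `n`-th quantization error. -/
def quantErr (P : Measure ℝ) (n : ℕ) : ℝ :=
  sInf {v | ∃ A : Set ℝ, A.Finite ∧ A.Nonempty ∧ A.ncard ≤ n ∧ v = err P A}

/-- An optimal set of `n`-means. -/
def IsOptimal (P : Measure ℝ) (n : ℕ) (A : Set ℝ) : Prop :=
  A.Finite ∧ A.Nonempty ∧ A.ncard ≤ n ∧ err P A = quantErr P n

/-- The Voronoi region of `a` with respect to `A`. -/
def voronoi (A : Set ℝ) (a : ℝ) : Set ℝ := {x | ∀ b ∈ A, |x - a| ≤ |x - b|}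

/-- `α(ℓ) = {a(ω) : p_ω = 2^{-ℓ}} ∪ {a(ω,∞) : p_ω = 2^{-ℓ}}`. -/
def alphaSet (l : ℕ) : Set ℝ :=
  {x | ∃ ω : List ℕ, IsWord ω ∧ pword ω = (2 : ℝ)⁻¹ ^ l ∧ (x = aw ω ∨ x = awInf ω)}

/-- The set `α_n(I)` built from `α(ℓ)` and `I ⊆ α(ℓ)`. -/
def alphaNI (l : ℕ) (I : Set ℝ) : Set ℝ :=
  (alphaSet l \ I)
    ∪ {x | ∃ ω : List ℕ, IsWord ω ∧ pword ω = (2 : ℝ)⁻¹ ^ l ∧ aw ω ∈ I ∧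
        (x = aw (ω ++ [1]) ∨ x = awInf (ω ++ [1]))}
    ∪ {x | ∃ ω : List ℕ, IsWord ω ∧ pword ω = (2 : ℝ)⁻¹ ^ l ∧ awInf ω ∈ I ∧
        (x = aw (wordInc ω 1) ∨ x = awInf (wordInc ω 1))}

namespace QAux

lemma smap_eq {j : ℕ} (hj : 1 ≤ j) (x : ℝ) :
    Smap j x = (3:ℝ)⁻¹ ^ j * x + (1 - 3 * (3:ℝ)⁻¹ ^ j) := by
  obtain ⟨m, rfl⟩ := Nat.exists_eq_add_of_le hj
  simp only [Smap, Nat.add_sub_cancel_left]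
  rw [pow_add]
  have h3 : (3:ℝ) ^ m ≠ 0 := by positivity
  field_simp
  have h4 : (1/3:ℝ)^m * 3^m = 1 := by rw [← mul_pow]; norm_num
  linear_combination (3 - x) * h4

lemma smap_measurable (j : ℕ) : Measurable (Smap j) := by
  unfold Smap; fun_prop

lemma smap_mem_one {x : ℝ} (hx : x ∈ Icc (0:ℝ) 1) : Smap 1 x ∈ Icc (0:ℝ) (1/3) := by
  rw [smap_eq le_rfl]
  obtain ⟨h0, h1⟩ := hx
  constructor <;> [nlinarith; nlinarith]

lemma smap_mem_ge2 {j : ℕ} (hj : 2 ≤ j) {x : ℝ} (hx : x ∈ Icc (0:ℝ) 1) :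
    Smap j x ∈ Icc (2/3:ℝ) 1 := by
  rw [smap_eq (le_trans one_le_two hj)]
  obtain ⟨h0, h1⟩ := hx
  have hr : (3:ℝ)⁻¹ ^ j ≤ (3:ℝ)⁻¹ ^ 2 := by
    apply pow_le_pow_of_le_one (by norm_num) (by norm_num) hj
  have hr0 : (0:ℝ) < (3:ℝ)⁻¹ ^ j := by positivity
  constructor <;> nlinarith

lemma smap_mem_I {j : ℕ} (hj : 1 ≤ j) {x : ℝ} (hx : x ∈ Icc (0:ℝ) 1) :
    Smap j x ∈ Icc (0:ℝ) 1 := by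
  rcases eq_or_lt_of_le hj with h | h
  · subst h
    have := smap_mem_one hx
    exact ⟨this.1, le_trans this.2 (by norm_num)⟩
  · have := smap_mem_ge2 h hx
    exact ⟨le_trans (by norm_num) this.1, this.2⟩

section Meas

variable (P : Measure ℝ) [IsProbabilityMeasure P]
  (hsupp : P (Set.Icc 0 1) = 1) (hself : SelfSim P)

include hsupp in
lemma null_out : P (Set.Icc (0:ℝ) 1)ᶜ = 0 := by
  have h := measure_compl (μ := P) (s := Set.Icc (0:ℝ) 1) measurableSet_Icc (measure_ne_top P _)
  rw [hsupp, measure_univ] at h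
  simp [h]

include hsupp in
lemma ae_mem_I : ∀ᵐ x ∂P, x ∈ Set.Icc (0:ℝ) 1 := by
  rw [ae_iff]
  exact measure_mono_null (fun x hx => hx) (null_out P hsupp)

include hself in
lemma P_term_le (A : Set ℝ) (hA : MeasurableSet A) (j : ℕ) :
    ((2:ℝ≥0∞) ^ (j+1))⁻¹ * P (Smap (j+1) ⁻¹' A) ≤ P A := by
  conv_rhs => rw [hself]
  rw [Measure.sum_apply _ hA]
  refine le_trans (le_of_eq ?_) (ENNReal.le_tsum j)
  rw [Measure.smul_apply, Measure.map_apply (smap_measurable _) hA, smul_eq_mul]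

include hsupp hself in
lemma int_id (f : ℝ → ℝ) (hm : Measurable f) (hint : Integrable f P) :
    ∫ x, f x ∂P = ∑' j : ℕ, (2⁻¹:ℝ)^(j+1) * ∫ x, f (Smap (j+1) x) ∂P := by
  have hint2 : Integrable f (Measure.sum fun j : ℕ =>
      ((2 : ℝ≥0∞) ^ (j + 1))⁻¹ • P.map (Smap (j + 1))) := by rw [← hself]; exact hint
  conv_lhs => rw [hself]
  rw [integral_sum_measure hint2]
  congr 1
  funext j
  rw [integral_smul_measure, integral_map (smap_measurable (j+1)).aemeasurable
    hm.aestronglyMeasurable]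
  have : ((2:ℝ≥0∞) ^ (j+1))⁻¹.toReal = (2⁻¹:ℝ)^(j+1) := by
    rw [ENNReal.toReal_inv, ENNReal.toReal_pow, inv_pow]
    norm_num
  rw [this, smul_eq_mul]

lemma sum_s1 {r : ℝ} (h0 : 0 ≤ r) (h1 : r < 1) : Summable (fun j : ℕ => r^(j+1)) := by
  simpa [pow_succ] using (summable_geometric_of_lt_one h0 h1).mul_right r

lemma tsum_s1 {r : ℝ} (h0 : 0 ≤ r) (h1 : r < 1) : ∑' j:ℕ, r^(j+1) = r/(1-r) := by
  have h : (fun j : ℕ => r^(j+1)) = fun j : ℕ => r^j * r := by funext j; rw [pow_succ]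
  rw [h, tsum_mul_right, tsum_geometric_of_lt_one h0 h1, inv_mul_eq_div]

lemma sum_s2 {r : ℝ} (h0 : 0 ≤ r) (h1 : r < 1) : Summable (fun j : ℕ => r^(j+2)) := by
  simpa [pow_succ, mul_assoc] using (summable_geometric_of_lt_one h0 h1).mul_right (r*r)

lemma tsum_s2 {r : ℝ} (h0 : 0 ≤ r) (h1 : r < 1) : ∑' j:ℕ, r^(j+2) = r^2/(1-r) := by
  have h : (fun j : ℕ => r^(j+2)) = fun j : ℕ => r^j * r^2 := by funext j; ring
  rw [h, tsum_mul_right, tsum_geometric_of_lt_one h0 h1, inv_mul_eq_div]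

/-- integrability of indicators of continuous functions on compact intervals -/
lemma integrable_ind_cont (a b : ℝ) (g : ℝ → ℝ) (hg : Continuous g) :
    Integrable (Set.indicator (Icc a b) g) P :=
  (hg.integrableOn_Icc).integrable_indicator measurableSet_Icc

def MM1 (P : Measure ℝ) : ℝ := ∫ x, Set.indicator (Icc (0:ℝ) 1) (fun y => y) x ∂P
def MM2 (P : Measure ℝ) : ℝ := ∫ x, Set.indicator (Icc (0:ℝ) 1) (fun y => y^2) x ∂P

include hsupp in
lemma int_ind_const (c : ℝ) :
    ∫ x, Set.indicator (Icc (0:ℝ) 1) (fun _ => c) x ∂P = c := by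
  rw [integral_indicator_const c measurableSet_Icc, measureReal_def, hsupp]
  simp

include hsupp in
lemma int_ind_lin (s t : ℝ) :
    ∫ x, Set.indicator (Icc (0:ℝ) 1) (fun y => s*y + t) x ∂P = s * MM1 P + t := by
  have h : (fun x => Set.indicator (Icc (0:ℝ) 1) (fun y => s*y + t) x)
      = fun x => s * Set.indicator (Icc (0:ℝ) 1) (fun y => y) x
        + Set.indicator (Icc (0:ℝ) 1) (fun _ => t) x := by
    funext x
    by_cases hx : x ∈ Icc (0:ℝ) 1 <;>
      simp [Set.indicator_of_mem, Set.indicator_of_notMem, hx]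
  rw [h, integral_add ((integrable_ind_cont P 0 1 (fun y => y) continuous_id).const_mul s)
    (integrable_ind_cont P 0 1 (fun _ => t) continuous_const),
    integral_const_mul, int_ind_const P hsupp]
  rfl

include hsupp in
lemma int_ind_quad (s t : ℝ) :
    ∫ x, Set.indicator (Icc (0:ℝ) 1) (fun y => (s*y + t)^2) x ∂P
      = s^2 * MM2 P + 2*s*t * MM1 P + t^2 := by
  have h : (fun x => Set.indicator (Icc (0:ℝ) 1) (fun y => (s*y + t)^2) x)
      = fun x => s^2 * Set.indicator (Icc (0:ℝ) 1) (fun y => y^2) x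
        + Set.indicator (Icc (0:ℝ) 1) (fun y => (2*s*t)*y + t^2) x := by
    funext x
    by_cases hx : x ∈ Icc (0:ℝ) 1 <;>
      simp [Set.indicator_of_mem, Set.indicator_of_notMem, hx] <;> ring
  rw [h, integral_add ((integrable_ind_cont P 0 1 (fun y => y^2) (by continuity)).const_mul _)
    (integrable_ind_cont P 0 1 (fun y => (2*s*t)*y + t^2) (by continuity)),
    integral_const_mul, int_ind_lin P hsupp]
  show s^2 * MM2 P + _ = _
  ring

include hsupp hself in
lemma MM1_val : MM1 P = 1/2 := by
  have hterm : ∀ j : ℕ,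
      ∫ x, Set.indicator (Icc (0:ℝ) 1) (fun y => y) (Smap (j+1) x) ∂P
        = (3:ℝ)⁻¹^(j+1) * MM1 P + (1 - 3*(3:ℝ)⁻¹^(j+1)) := by
    intro j
    have hcong : ∀ᵐ x ∂P, Set.indicator (Icc (0:ℝ) 1) (fun y => y) (Smap (j+1) x)
        = Set.indicator (Icc (0:ℝ) 1)
            (fun y => (3:ℝ)⁻¹^(j+1)*y + (1 - 3*(3:ℝ)⁻¹^(j+1))) x := by
      filter_upwards [ae_mem_I P hsupp] with x hx
      rw [Set.indicator_of_mem (smap_mem_I (Nat.succ_le_succ (Nat.zero_le j)) hx),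
        Set.indicator_of_mem hx, smap_eq (Nat.succ_le_succ (Nat.zero_le j))]
    rw [integral_congr_ae hcong, int_ind_lin P hsupp]
  have key := int_id P hsupp hself (Set.indicator (Icc (0:ℝ) 1) (fun y => y))
    (measurable_id.indicator measurableSet_Icc)
    (integrable_ind_cont P 0 1 (fun y => y) continuous_id)
  have e1 : MM1 P = ∑' j : ℕ, (2⁻¹:ℝ)^(j+1)
      * ∫ x, Set.indicator (Icc (0:ℝ) 1) (fun y => y) (Smap (j+1) x) ∂P := key
  have key2 : MM1 P = ∑' j : ℕ, ((MM1 P - 3) * (6:ℝ)⁻¹^(j+1) + (2:ℝ)⁻¹^(j+1)) := by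
    conv_lhs => rw [e1]
    apply tsum_congr
    intro j
    rw [hterm j]
    have h6 : (6:ℝ)⁻¹^(j+1) = (2:ℝ)⁻¹^(j+1) * (3:ℝ)⁻¹^(j+1) := by
      rw [← mul_pow]; norm_num
    rw [h6]; ring
  rw [Summable.tsum_add ((sum_s1 (by norm_num) (by norm_num)).mul_left _)
    (sum_s1 (by norm_num) (by norm_num)), tsum_mul_left,
    tsum_s1 (by norm_num : (0:ℝ) ≤ 6⁻¹) (by norm_num),
    tsum_s1 (by norm_num : (0:ℝ) ≤ 2⁻¹) (by norm_num)] at key2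
  norm_num at key2
  linarith

include hsupp hself in
lemma MM2_val : MM2 P = 3/8 := by
  have hM1 := MM1_val P hsupp hself
  have hterm : ∀ j : ℕ,
      ∫ x, Set.indicator (Icc (0:ℝ) 1) (fun y => y^2) (Smap (j+1) x) ∂P
        = ((3:ℝ)⁻¹^(j+1))^2 * MM2 P
          + 2*((3:ℝ)⁻¹^(j+1))*(1 - 3*(3:ℝ)⁻¹^(j+1)) * MM1 P
          + (1 - 3*(3:ℝ)⁻¹^(j+1))^2 := by
    intro j
    have hcong : ∀ᵐ x ∂P, Set.indicator (Icc (0:ℝ) 1) (fun y => y^2) (Smap (j+1) x)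
        = Set.indicator (Icc (0:ℝ) 1)
            (fun y => ((3:ℝ)⁻¹^(j+1)*y + (1 - 3*(3:ℝ)⁻¹^(j+1)))^2) x := by
      filter_upwards [ae_mem_I P hsupp] with x hx
      rw [Set.indicator_of_mem (smap_mem_I (Nat.succ_le_succ (Nat.zero_le j)) hx),
        Set.indicator_of_mem hx, smap_eq (Nat.succ_le_succ (Nat.zero_le j))]
    rw [integral_congr_ae hcong, int_ind_quad P hsupp]
  have key := int_id P hsupp hself (Set.indicator (Icc (0:ℝ) 1) (fun y => y^2))
    ((measurable_id.pow_const 2).indicator measurableSet_Icc)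
    (integrable_ind_cont P 0 1 (fun y => y^2) (by continuity))
  have e1 : MM2 P = ∑' j : ℕ, (2⁻¹:ℝ)^(j+1)
      * ∫ x, Set.indicator (Icc (0:ℝ) 1) (fun y => y^2) (Smap (j+1) x) ∂P := key
  have key2 : MM2 P = ∑' j : ℕ, ((MM2 P + 6) * (18:ℝ)⁻¹^(j+1) + ((2:ℝ)⁻¹^(j+1) - 5 * (6:ℝ)⁻¹^(j+1))) := by
    conv_lhs => rw [e1]
    apply tsum_congr
    intro j
    rw [hterm j, hM1]
    have h6 : (6:ℝ)⁻¹^(j+1) = (2:ℝ)⁻¹^(j+1) * (3:ℝ)⁻¹^(j+1) := by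
      rw [← mul_pow]; norm_num
    have h18 : (18:ℝ)⁻¹^(j+1) = (2:ℝ)⁻¹^(j+1) * ((3:ℝ)⁻¹^(j+1))^2 := by
      rw [show ((3:ℝ)⁻¹^(j+1))^2 = ((3:ℝ)⁻¹^2)^(j+1) by rw [← pow_mul, ← pow_mul, Nat.mul_comm],
        ← mul_pow]
      norm_num
    rw [h6, h18]; ring
  rw [Summable.tsum_add ((sum_s1 (by norm_num) (by norm_num)).mul_left _)
    ((sum_s1 (by norm_num) (by norm_num)).sub ((sum_s1 (by norm_num) (by norm_num)).mul_left 5)),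
    tsum_mul_left, Summable.tsum_sub (sum_s1 (by norm_num) (by norm_num))
      ((sum_s1 (by norm_num) (by norm_num)).mul_left 5), tsum_mul_left,
    tsum_s1 (by norm_num : (0:ℝ) ≤ 18⁻¹) (by norm_num),
    tsum_s1 (by norm_num : (0:ℝ) ≤ 2⁻¹) (by norm_num),
    tsum_s1 (by norm_num : (0:ℝ) ≤ 6⁻¹) (by norm_num)] at key2
  norm_num at key2
  linarith

include hsupp hself in
lemma int_left (p : ℝ) :
    ∫ x, Set.indicator (Icc (0:ℝ) (1/3)) (fun y => (y-p)^2) x ∂P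
      = 1/2 * (1/24 - p/3 + p^2) := by
  have hmeas : Measurable (Set.indicator (Icc (0:ℝ) (1/3)) (fun y : ℝ => (y-p)^2)) :=
    ((measurable_id.sub_const p).pow_const 2).indicator measurableSet_Icc
  have key := int_id P hsupp hself (Set.indicator (Icc (0:ℝ) (1/3)) (fun y => (y-p)^2)) hmeas
    (integrable_ind_cont P 0 (1/3) (fun y => (y-p)^2) (by continuity))
  rw [key, tsum_eq_single 0 ?hz]
  case hz =>
    intro j hj
    obtain ⟨m, rfl⟩ := Nat.exists_eq_succ_of_ne_zero hj
    have hzero : ∀ᵐ x ∂P,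
        Set.indicator (Icc (0:ℝ) (1/3)) (fun y => (y-p)^2) (Smap (m+1+1) x) = 0 := by
      filter_upwards [ae_mem_I P hsupp] with x hx
      have hmem := smap_mem_ge2 (by omega : 2 ≤ m+1+1) hx
      rw [Set.indicator_of_notMem]
      intro hc
      have := hmem.1
      have := hc.2
      linarith
    rw [integral_eq_zero_of_ae hzero, mul_zero]
  · have hcong : ∀ᵐ x ∂P,
        Set.indicator (Icc (0:ℝ) (1/3)) (fun y => (y-p)^2) (Smap (0+1) x)
          = Set.indicator (Icc (0:ℝ) 1) (fun y => ((3:ℝ)⁻¹*y + -p)^2) x := by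
      filter_upwards [ae_mem_I P hsupp] with x hx
      rw [Set.indicator_of_mem (smap_mem_one hx), Set.indicator_of_mem hx,
        smap_eq le_rfl]
      ring
    rw [integral_congr_ae hcong, int_ind_quad P hsupp, MM1_val P hsupp hself,
      MM2_val P hsupp hself]
    norm_num
    ring

include hsupp hself in
lemma int_right (p : ℝ) :
    ∫ x, Set.indicator (Icc (2/3:ℝ) 1) (fun y => (y-p)^2) x ∂P
      = 1/48 - (1-p)/6 + (1-p)^2/2 := by
  have hmeas : Measurable (Set.indicator (Icc (2/3:ℝ) 1) (fun y : ℝ => (y-p)^2)) :=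
    ((measurable_id.sub_const p).pow_const 2).indicator measurableSet_Icc
  have key := int_id P hsupp hself (Set.indicator (Icc (2/3:ℝ) 1) (fun y => (y-p)^2)) hmeas
    (integrable_ind_cont P (2/3) 1 (fun y => (y-p)^2) (by continuity))
  set a : ℕ → ℝ := fun j => (2⁻¹:ℝ)^(j+1)
    * ∫ x, Set.indicator (Icc (2/3:ℝ) 1) (fun y => (y-p)^2) (Smap (j+1) x) ∂P with ha
  set e : ℕ → ℝ := fun j => (51/8)*(18:ℝ)⁻¹^(j+2) - 5*(1-p)*(6:ℝ)⁻¹^(j+2)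
    + (1-p)^2*(2:ℝ)⁻¹^(j+2) with he
  have h0 : a 0 = 0 := by
    have hzero : ∀ᵐ x ∂P,
        Set.indicator (Icc (2/3:ℝ) 1) (fun y => (y-p)^2) (Smap (0+1) x) = 0 := by
      filter_upwards [ae_mem_I P hsupp] with x hx
      have hmem := smap_mem_one hx
      rw [Set.indicator_of_notMem]
      intro hc
      have := hmem.2
      have := hc.1
      linarith
    rw [ha]
    simp only []
    rw [integral_eq_zero_of_ae hzero, mul_zero]
  have hsucc : ∀ j : ℕ, a (j+1) = e j := by
    intro j
    have hcong : ∀ᵐ x ∂P,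
        Set.indicator (Icc (2/3:ℝ) 1) (fun y => (y-p)^2) (Smap (j+1+1) x)
          = Set.indicator (Icc (0:ℝ) 1)
              (fun y => ((3:ℝ)⁻¹^(j+2)*y + (1 - 3*(3:ℝ)⁻¹^(j+2) - p))^2) x := by
      filter_upwards [ae_mem_I P hsupp] with x hx
      rw [Set.indicator_of_mem (smap_mem_ge2 (by omega) hx), Set.indicator_of_mem hx,
        smap_eq (by omega : 1 ≤ j+1+1)]
      have : j+1+1 = j+2 := rfl
      rw [this]
      ring
    rw [ha]
    simp only []
    rw [integral_congr_ae hcong, int_ind_quad P hsupp, MM1_val P hsupp hself,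
      MM2_val P hsupp hself, he]
    simp only []
    have h6 : (6:ℝ)⁻¹^(j+2) = (2:ℝ)⁻¹^(j+2) * (3:ℝ)⁻¹^(j+2) := by
      rw [← mul_pow]; norm_num
    have h18 : (18:ℝ)⁻¹^(j+2) = (2:ℝ)⁻¹^(j+2) * ((3:ℝ)⁻¹^(j+2))^2 := by
      rw [show ((3:ℝ)⁻¹^(j+2))^2 = ((3:ℝ)⁻¹^2)^(j+2) by
        rw [← pow_mul, ← pow_mul, Nat.mul_comm], ← mul_pow]
      norm_num
    rw [h6, h18]
    have : j+1+1 = j+2 := rfl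
    rw [this]
    ring
  have hsumE : Summable e := by
    apply Summable.add
    · exact ((sum_s2 (by norm_num) (by norm_num)).mul_left _).sub
        ((sum_s2 (by norm_num) (by norm_num)).mul_left _)
    · exact (sum_s2 (by norm_num) (by norm_num)).mul_left _
  have hsuma : Summable a := by
    rw [← summable_nat_add_iff 1]
    exact hsumE.congr (fun j => (hsucc j).symm)
  rw [key, Summable.tsum_eq_zero_add hsuma, h0, zero_add, tsum_congr hsucc, he]
  simp only []
  rw [Summable.tsum_add (((sum_s2 (by norm_num) (by norm_num)).mul_left _).sub
      ((sum_s2 (by norm_num) (by norm_num)).mul_left _))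
      ((sum_s2 (by norm_num) (by norm_num)).mul_left _),
    Summable.tsum_sub ((sum_s2 (by norm_num) (by norm_num)).mul_left _)
      ((sum_s2 (by norm_num) (by norm_num)).mul_left _),
    tsum_mul_left, tsum_mul_left, tsum_mul_left,
    tsum_s2 (by norm_num : (0:ℝ) ≤ 18⁻¹) (by norm_num),
    tsum_s2 (by norm_num : (0:ℝ) ≤ 6⁻¹) (by norm_num),
    tsum_s2 (by norm_num : (0:ℝ) ≤ 2⁻¹) (by norm_num)]
  norm_num
  ring

include hsupp hself in
lemma gap_null : P (Ioo (1/3:ℝ) (2/3)) = 0 := by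
  conv_lhs => rw [hself]
  rw [Measure.sum_apply _ measurableSet_Ioo]
  have hz : ∀ j : ℕ, (((2:ℝ≥0∞) ^ (j + 1))⁻¹ • P.map (Smap (j + 1))) (Ioo (1/3:ℝ) (2/3)) = 0 := by
    intro j
    rw [Measure.smul_apply, Measure.map_apply (smap_measurable _) measurableSet_Ioo]
    have hsub : Smap (j+1) ⁻¹' (Ioo (1/3:ℝ) (2/3)) ⊆ (Icc (0:ℝ) 1)ᶜ := by
      intro x hx
      simp only [mem_preimage, mem_Ioo] at hx
      intro hxI
      rcases Nat.lt_or_ge (j+1) 2 with h | h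
      · have hj0 : j = 0 := by omega
        subst hj0
        have h2 := (smap_mem_one hxI).2
        linarith [hx.1]
      · have := smap_mem_ge2 h hxI
        linarith [hx.2, this.1]
    rw [measure_mono_null hsub (null_out P hsupp)]
    simp
  simp only [hz, tsum_zero]

include hsupp hself in
lemma ae_mem_LR : ∀ᵐ x ∂P, x ∈ Icc (0:ℝ) (1/3) ∪ Icc (2/3:ℝ) 1 := by
  rw [ae_iff]
  apply measure_mono_null (t := (Icc (0:ℝ) 1)ᶜ ∪ Ioo (1/3:ℝ) (2/3))
  · intro x hx
    simp only [mem_setOf_eq, mem_union, not_or] at hx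
    obtain ⟨hL, hR⟩ := hx
    by_cases h : x ∈ Icc (0:ℝ) 1
    · right
      obtain ⟨h0, h1⟩ := mem_Icc.mp h
      rw [mem_Ioo]
      constructor
      · by_contra hc
        push_neg at hc
        exact hL (mem_Icc.mpr ⟨h0, hc⟩)
      · by_contra hc
        push_neg at hc
        exact hR (mem_Icc.mpr ⟨hc, h1⟩)
    · left
      exact h
  · exact measure_union_null (null_out P hsupp) (gap_null P hsupp hself)

include hsupp hself in
lemma mass_left : ∀ r : ℕ, ((2:ℝ≥0∞)⁻¹)^r ≤ P (Icc 0 ((3:ℝ)⁻¹^r)) := by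
  intro r
  induction r with
  | zero => simp [hsupp]
  | succ r ih =>
    have hsub : Icc (0:ℝ) ((3:ℝ)⁻¹^r) ⊆ Smap 1 ⁻¹' (Icc 0 ((3:ℝ)⁻¹^(r+1))) := by
      intro x hx
      obtain ⟨h0, h1⟩ := hx
      simp only [mem_preimage, mem_Icc]
      have e2 : (3:ℝ)⁻¹^(r+1) = 3⁻¹^r * 3⁻¹ := pow_succ _ _
      rw [smap_eq le_rfl, e2]
      constructor <;> linarith
    calc ((2:ℝ≥0∞)⁻¹)^(r+1) = ((2:ℝ≥0∞)^(0+1))⁻¹ * (2⁻¹)^r := by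
          rw [pow_succ, mul_comm]
          norm_num
    _ ≤ ((2:ℝ≥0∞)^(0+1))⁻¹ * P (Icc 0 ((3:ℝ)⁻¹^r)) := by
          exact mul_le_mul_right ih _
    _ ≤ ((2:ℝ≥0∞)^(0+1))⁻¹ * P (Smap (0+1) ⁻¹' (Icc 0 ((3:ℝ)⁻¹^(r+1)))) := by
          exact mul_le_mul_right (measure_mono hsub) _
    _ ≤ P (Icc 0 ((3:ℝ)⁻¹^(r+1))) := P_term_le P hself _ measurableSet_Icc 0

include hsupp hself in
lemma mass_q (r : ℕ) : ∀ k : ℕ, ((2:ℝ≥0∞)⁻¹)^(k+r+2)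
    ≤ P (Icc (2*(3:ℝ)⁻¹^(k+1)) (2*(3:ℝ)⁻¹^(k+1) + (3:ℝ)⁻¹^(k+r+2))) := by
  intro k
  induction k with
  | zero =>
    have hsub : Icc (0:ℝ) ((3:ℝ)⁻¹^r)
        ⊆ Smap 2 ⁻¹' Icc (2*(3:ℝ)⁻¹^(0+1)) (2*(3:ℝ)⁻¹^(0+1) + (3:ℝ)⁻¹^(0+r+2)) := by
      intro x hx
      obtain ⟨h0, h1⟩ := hx
      simp only [mem_preimage, mem_Icc]
      have e1 : (3:ℝ)⁻¹^(0+r+2) = (3:ℝ)⁻¹^r * 9⁻¹ := by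
        rw [Nat.zero_add, pow_add]
        norm_num
      rw [smap_eq (by norm_num), e1]
      constructor <;> linarith
    calc ((2:ℝ≥0∞)⁻¹)^(0+r+2) = ((2:ℝ≥0∞)^(1+1))⁻¹ * (2⁻¹)^r := by
          rw [Nat.zero_add, pow_add, mul_comm, ENNReal.inv_pow]
    _ ≤ ((2:ℝ≥0∞)^(1+1))⁻¹ * P (Icc 0 ((3:ℝ)⁻¹^r)) :=
          mul_le_mul_right (mass_left P hsupp hself r) _
    _ ≤ ((2:ℝ≥0∞)^(1+1))⁻¹ * P (Smap (1+1) ⁻¹'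
          Icc (2*(3:ℝ)⁻¹^(0+1)) (2*(3:ℝ)⁻¹^(0+1) + (3:ℝ)⁻¹^(0+r+2))) :=
          mul_le_mul_right (measure_mono hsub) _
    _ ≤ _ := P_term_le P hself _ measurableSet_Icc 1
  | succ k ih =>
    have hsub : Icc (2*(3:ℝ)⁻¹^(k+1)) (2*(3:ℝ)⁻¹^(k+1) + (3:ℝ)⁻¹^(k+r+2))
        ⊆ Smap 1 ⁻¹' Icc (2*(3:ℝ)⁻¹^(k+1+1)) (2*(3:ℝ)⁻¹^(k+1+1) + (3:ℝ)⁻¹^(k+1+r+2)) := by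
      intro x hx
      obtain ⟨h0, h1⟩ := hx
      simp only [mem_preimage, mem_Icc]
      rw [smap_eq le_rfl]
      have e1 : (3:ℝ)⁻¹^(k+1+1) = (3:ℝ)⁻¹^(k+1) * 3⁻¹ := by rw [pow_succ]
      have e2 : (3:ℝ)⁻¹^(k+1+r+2) = (3:ℝ)⁻¹^(k+r+2) * 3⁻¹ := by
        rw [show k+1+r+2 = (k+r+2)+1 by omega, pow_succ]
      rw [e1, e2]
      constructor <;> linarith
    calc ((2:ℝ≥0∞)⁻¹)^(k+1+r+2) = ((2:ℝ≥0∞)^(0+1))⁻¹ * (2⁻¹)^(k+r+2) := by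
          rw [show k+1+r+2 = (k+r+2)+1 by omega, pow_succ, mul_comm]
          norm_num
    _ ≤ ((2:ℝ≥0∞)^(0+1))⁻¹ * P (Icc (2*(3:ℝ)⁻¹^(k+1)) (2*(3:ℝ)⁻¹^(k+1) + (3:ℝ)⁻¹^(k+r+2))) :=
          mul_le_mul_right ih _
    _ ≤ ((2:ℝ≥0∞)^(0+1))⁻¹ * P (Smap (0+1) ⁻¹'
          Icc (2*(3:ℝ)⁻¹^(k+1+1)) (2*(3:ℝ)⁻¹^(k+1+1) + (3:ℝ)⁻¹^(k+1+r+2))) :=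
          mul_le_mul_right (measure_mono hsub) _
    _ ≤ _ := P_term_le P hself _ measurableSet_Icc 0

end Meas

/-! ### the min-distance function -/

def phi (A : Set ℝ) (x : ℝ) : ℝ := sInf ((fun a => (x - a)^2) '' A)

lemma err_def (P : Measure ℝ) (A : Set ℝ) : err P A = ∫ x, phi A x ∂P := rfl

lemma phi_nonneg (A : Set ℝ) (x : ℝ) : 0 ≤ phi A x := by
  apply Real.sInf_nonneg
  rintro y ⟨a, -, rfl⟩
  positivity

lemma phi_le {A : Set ℝ} (hfin : A.Finite) {a : ℝ} (ha : a ∈ A) (x : ℝ) :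
    phi A x ≤ (x - a)^2 :=
  csInf_le (Set.Finite.bddBelow (hfin.image _)) ⟨a, ha, rfl⟩

lemma le_phi {A : Set ℝ} (hne : A.Nonempty) {c : ℝ} {x : ℝ}
    (h : ∀ a ∈ A, c ≤ (x - a)^2) : c ≤ phi A x := by
  apply le_csInf (hne.image _)
  rintro y ⟨a, ha, rfl⟩
  exact h a ha

lemma phi_mono {A B : Set ℝ} (hB : B.Finite) (hA : A.Nonempty) (hAB : A ⊆ B) (x : ℝ) :
    phi B x ≤ phi A x :=
  csInf_le_csInf (Set.Finite.bddBelow (hB.image _)) (hA.image _) (Set.image_mono hAB)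

lemma phi_insert {A : Set ℝ} (hfin : A.Finite) (hne : A.Nonempty) (a x : ℝ) :
    phi (insert a A) x = min ((x - a)^2) (phi A x) := by
  rw [phi, Set.image_insert_eq,
    csInf_insert (Set.Finite.bddBelow (hfin.image _)) (hne.image _)]
  rfl

lemma phi_continuous {A : Set ℝ} (hfin : A.Finite) (hne : A.Nonempty) :
    Continuous (phi A) := by
  classical
  refine Set.Finite.induction_on (motive := fun S _ => S.Nonempty → Continuous (phi S)) A hfin
    ?_ ?_ hne
  · intro h
    exact absurd h (by simp)
  · intro a s _ hsfin ih _
    rcases s.eq_empty_or_nonempty with rfl | hsne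
    · have h : phi (insert a ∅) = fun x => (x - a)^2 := by
        funext x
        simp [phi]
      rw [h]
      continuity
    · have h : phi (insert a s) = fun x => min ((x - a)^2) (phi s x) := by
        funext x
        exact phi_insert hsfin hsne a x
      rw [h]
      exact Continuous.min (by continuity) (ih hsne)

lemma phi_integrable {A : Set ℝ} (hfin : A.Finite) (hne : A.Nonempty)
    (P : Measure ℝ) [IsProbabilityMeasure P] (hsupp : P (Set.Icc 0 1) = 1) :
    Integrable (phi A) P := by
  obtain ⟨a₀, ha₀⟩ := hne
  refine ⟨(phi_continuous hfin ⟨a₀, ha₀⟩).measurable.aestronglyMeasurable,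
    HasFiniteIntegral.of_bounded (C := (1 + |a₀|)^2) ?_⟩
  filter_upwards [ae_mem_I P hsupp] with x hx
  rw [Real.norm_eq_abs, abs_of_nonneg (phi_nonneg _ _)]
  refine le_trans (phi_le hfin ha₀ x) ?_
  obtain ⟨hx0, hx1⟩ := hx
  have h1 := le_abs_self a₀
  have h2 := neg_abs_le a₀
  nlinarith [abs_nonneg a₀]

lemma err_nonneg (P : Measure ℝ) (A : Set ℝ) : 0 ≤ err P A :=
  integral_nonneg (phi_nonneg A)

lemma quantErr_le (P : Measure ℝ) (n : ℕ) {A : Set ℝ} (hfin : A.Finite)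
    (hne : A.Nonempty) (hcard : A.ncard ≤ n) : quantErr P n ≤ err P A := by
  apply csInf_le
  · refine ⟨0, ?_⟩
    rintro v ⟨B, hBf, hBne, hBc, rfl⟩
    exact err_nonneg P B
  · exact ⟨A, hfin, hne, hcard, rfl⟩

lemma integral_lt (P : Measure ℝ) {f g : ℝ → ℝ} (hf : Integrable f P) (hg : Integrable g P)
    (hle : ∀ᵐ x ∂P, f x ≤ g x) {S : Set ℝ} (hS : P S ≠ 0) (hlt : ∀ x ∈ S, f x < g x) :
    ∫ x, f x ∂P < ∫ x, g x ∂P := by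
  rcases lt_or_ge (∫ x, f x ∂P) (∫ x, g x ∂P) with h | h
  · exact h
  exfalso
  have hmono : ∫ x, f x ∂P ≤ ∫ x, g x ∂P := integral_mono_ae hf hg hle
  have heq : ∫ x, (g x - f x) ∂P = 0 := by
    rw [integral_sub hg hf]
    linarith
  have h0 : 0 ≤ᵐ[P] fun x => g x - f x := by
    filter_upwards [hle] with x hx
    simpa using hx
  have hae : (fun x => g x - f x) =ᵐ[P] 0 :=
    (integral_eq_zero_iff_of_nonneg_ae h0 (hg.sub hf)).mp heq
  have hnull : P {x | ¬ (g x - f x = (0:ℝ))} = 0 := ae_iff.mp hae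
  apply hS
  apply measure_mono_null _ hnull
  intro x hx
  simp only [mem_setOf_eq]
  have := hlt x hx
  intro hc
  linarith

section Meas2

variable (P : Measure ℝ) [IsProbabilityMeasure P]
  (hsupp : P (Set.Icc 0 1) = 1) (hself : SelfSim P)

include hsupp hself in
lemma add_point {γ : Set ℝ} (hfin : γ.Finite) (hne : γ.Nonempty) :
    ∃ p : ℝ, err P (insert p γ) < err P γ := by
  classical
  have hqanti : StrictAnti (fun k : ℕ => 2*(3:ℝ)⁻¹^(k+1)) := by
    intro a b hab
    have h : (3:ℝ)⁻¹^(b+1) < (3:ℝ)⁻¹^(a+1) :=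
      pow_lt_pow_right_of_lt_one₀ (by norm_num) (by norm_num) (Nat.succ_lt_succ hab)
    show 2*(3:ℝ)⁻¹^(b+1) < 2*(3:ℝ)⁻¹^(a+1)
    linarith
  have hpre : ((fun k : ℕ => 2*(3:ℝ)⁻¹^(k+1)) ⁻¹' γ).Finite :=
    Set.Finite.preimage (Set.injOn_of_injective hqanti.injective) hfin
  obtain ⟨k, hk⟩ := hpre.infinite_compl.nonempty
  have hqk : 2*(3:ℝ)⁻¹^(k+1) ∉ γ := hk
  have hDne : ((fun a => |2*(3:ℝ)⁻¹^(k+1) - a|) '' γ).Nonempty := hne.image _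
  have hDfin : ((fun a => |2*(3:ℝ)⁻¹^(k+1) - a|) '' γ).Finite := hfin.image _
  set δ := sInf ((fun a => |2*(3:ℝ)⁻¹^(k+1) - a|) '' γ) with hδ
  have hδmem : δ ∈ (fun a => |2*(3:ℝ)⁻¹^(k+1) - a|) '' γ := hDne.csInf_mem hDfin
  have hδpos : 0 < δ := by
    obtain ⟨a, ha, hav⟩ := hδmem
    rw [← hav]
    exact abs_pos.mpr (sub_ne_zero.mpr (fun h => hqk (h ▸ ha)))
  have hδle : ∀ a ∈ γ, δ ≤ |2*(3:ℝ)⁻¹^(k+1) - a| :=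
    fun a ha => csInf_le hDfin.bddBelow ⟨a, ha, rfl⟩
  obtain ⟨r, hr⟩ := exists_pow_lt_of_lt_one (by linarith : (0:ℝ) < δ/2)
    (by norm_num : (3:ℝ)⁻¹ < 1)
  have hmpos : (0:ℝ) < (3:ℝ)⁻¹^(k+r+2) := by positivity
  have hmlt : (3:ℝ)⁻¹^(k+r+2) < δ/2 :=
    lt_of_le_of_lt (pow_le_pow_of_le_one (by norm_num) (by norm_num) (by omega)) hr
  have hPB : P (Icc (2*(3:ℝ)⁻¹^(k+1)) (2*(3:ℝ)⁻¹^(k+1) + (3:ℝ)⁻¹^(k+r+2))) ≠ 0 := by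
    have h1 := mass_q P hsupp hself r k
    have h2 : (0:ℝ≥0∞) < ((2:ℝ≥0∞)⁻¹)^(k+r+2) :=
      ENNReal.pow_pos (ENNReal.inv_pos.mpr (by norm_num)) _
    exact (lt_of_lt_of_le h2 h1).ne'
  refine ⟨2*(3:ℝ)⁻¹^(k+1), ?_⟩
  rw [err_def, err_def]
  refine integral_lt P (phi_integrable (hfin.insert _) (Set.insert_nonempty _ _) P hsupp)
    (phi_integrable hfin hne P hsupp) ?_ hPB ?_
  · exact Filter.Eventually.of_forall
      (fun x => phi_mono (hfin.insert _) hne (Set.subset_insert _ _) x)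
  · intro x hx
    obtain ⟨hx1, hx2⟩ := hx
    have h1 : phi (insert (2*(3:ℝ)⁻¹^(k+1)) γ) x ≤ (x - 2*(3:ℝ)⁻¹^(k+1))^2 :=
      phi_le (hfin.insert _) (Set.mem_insert _ _) x
    have h2 : (x - 2*(3:ℝ)⁻¹^(k+1))^2 ≤ ((3:ℝ)⁻¹^(k+r+2))^2 := by nlinarith
    have h3 : (δ - (3:ℝ)⁻¹^(k+r+2))^2 ≤ phi γ x := by
      apply le_phi hne
      intro a ha
      have hd := hδle a ha
      have htri : |2*(3:ℝ)⁻¹^(k+1) - a| ≤ |2*(3:ℝ)⁻¹^(k+1) - x| + |x - a| := abs_sub_le _ _ _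
      have hqx : |2*(3:ℝ)⁻¹^(k+1) - x| ≤ (3:ℝ)⁻¹^(k+r+2) :=
        abs_le.mpr ⟨by linarith, by linarith⟩
      have hxa : δ - (3:ℝ)⁻¹^(k+r+2) ≤ |x - a| := by linarith
      have h0m : (0:ℝ) ≤ δ - (3:ℝ)⁻¹^(k+r+2) := by linarith
      nlinarith [sq_abs (x - a), abs_nonneg (x - a)]
    have h4 : ((3:ℝ)⁻¹^(k+r+2))^2 < (δ - (3:ℝ)⁻¹^(k+r+2))^2 := by nlinarith
    calc phi (insert (2*(3:ℝ)⁻¹^(k+1)) γ) x ≤ ((3:ℝ)⁻¹^(k+r+2))^2 := le_trans h1 h2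
    _ < (δ - (3:ℝ)⁻¹^(k+r+2))^2 := h4
    _ ≤ phi γ x := h3

include hsupp hself in
lemma clamp_or_remove {n : ℕ} {α : Set ℝ} (hfin : α.Finite) (hne : α.Nonempty)
    (hcard : α.ncard ≤ n) (hopt : err P α = quantErr P n)
    {a₀ : ℝ} (ha₀ : a₀ ∈ α) (hne' : (α \ {a₀}).Nonempty) (c : ℝ)
    (hstrict : ∀ x ∈ Icc (0:ℝ) 1, (x - c)^2 < (x - a₀)^2) : False := by
  classical
  have hα'fin : (α \ {a₀}).Finite := hfin.subset diff_subset
  have hins : insert a₀ (α \ {a₀}) = α := by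
    rw [Set.insert_diff_singleton, Set.insert_eq_self.mpr ha₀]
  by_cases hae : ∀ᵐ x ∂P, phi α x = phi (α \ {a₀}) x
  · have herr : err P (α \ {a₀}) = quantErr P n := by
      rw [← hopt, err_def, err_def]
      exact (integral_congr_ae hae).symm
    obtain ⟨p, hp⟩ := add_point P hsupp hself hα'fin hne'
    have hcard' : (insert p (α \ {a₀})).ncard ≤ n := by
      have h1 : (α \ {a₀}).ncard + 1 = α.ncard := Set.ncard_diff_singleton_add_one ha₀ hfin
      have h2 := Set.ncard_insert_le p (α \ {a₀})
      omega
    have hq := quantErr_le P n (hα'fin.insert p) (Set.insert_nonempty _ _) hcard'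
    rw [← herr] at hq
    linarith
  · have hSne : P {x | ¬ (phi α x = phi (α \ {a₀}) x)} ≠ 0 := fun h0 => hae (ae_iff.mpr h0)
    have hPS : P ({x | ¬ (phi α x = phi (α \ {a₀}) x)} ∩ Icc (0:ℝ) 1) ≠ 0 := by
      intro h0
      apply hSne
      have hsub : {x | ¬ (phi α x = phi (α \ {a₀}) x)}
          ⊆ ({x | ¬ (phi α x = phi (α \ {a₀}) x)} ∩ Icc (0:ℝ) 1) ∪ (Icc (0:ℝ) 1)ᶜ := by
        intro x hx
        by_cases h : x ∈ Icc (0:ℝ) 1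
        · exact Or.inl ⟨hx, h⟩
        · exact Or.inr h
      exact measure_mono_null hsub (measure_union_null h0 (null_out P hsupp))
    set f : ℝ → ℝ := fun a => if a = a₀ then c else a with hf
    have hβfin : (f '' α).Finite := hfin.image f
    have hβne : (f '' α).Nonempty := hne.image f
    have hβcard : (f '' α).ncard ≤ n := le_trans (Set.ncard_image_le hfin) hcard
    have hlef : ∀ x ∈ Icc (0:ℝ) 1, phi (f '' α) x ≤ phi α x := by
      intro x hx
      apply le_phi hne
      intro a ha
      refine le_trans (phi_le hβfin (Set.mem_image_of_mem f ha) x) ?_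
      by_cases h : a = a₀
      · subst h
        simp only [hf, if_pos rfl]
        exact le_of_lt (hstrict x hx)
      · simp only [hf, if_neg h]
        exact le_rfl
    have hle : ∀ᵐ x ∂P, phi (f '' α) x ≤ phi α x := by
      filter_upwards [ae_mem_I P hsupp] with x hx
      exact hlef x hx
    have hlt : ∀ x ∈ {x | ¬ (phi α x = phi (α \ {a₀}) x)} ∩ Icc (0:ℝ) 1,
        phi (f '' α) x < phi α x := by
      rintro x ⟨hxS, hxI⟩
      have hmle : phi α x ≤ phi (α \ {a₀}) x := phi_mono hfin hne' diff_subset x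
      have hltm : phi α x < phi (α \ {a₀}) x := lt_of_le_of_ne hmle hxS
      have h1 : phi α x = min ((x - a₀)^2) (phi (α \ {a₀}) x) := by
        conv_lhs => rw [← hins]
        exact phi_insert hα'fin hne' a₀ x
      have hphieq : phi α x = (x - a₀)^2 := by
        rcases min_cases ((x - a₀)^2) (phi (α \ {a₀}) x) with ⟨hmin, _⟩ | ⟨hmin, _⟩
        · rw [h1, hmin]
        · rw [h1, hmin] at hltm
          exact absurd hltm (lt_irrefl _)
      have h2 : phi (f '' α) x ≤ (x - c)^2 :=
        phi_le hβfin ⟨a₀, ha₀, by simp [hf]⟩ x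
      rw [hphieq]
      exact lt_of_le_of_lt h2 (hstrict x hxI)
    have hfinal := integral_lt P (phi_integrable hβfin hβne P hsupp)
      (phi_integrable hfin hne P hsupp) hle hPS hlt
    have h5 : err P (f '' α) < err P α := by
      rw [err_def, err_def]
      exact hfinal
    have hq := quantErr_le P n hβfin hβne hβcard
    rw [← hopt] at hq
    linarith

end Meas2

end QAux
theorem optimal_meets_ends (P : Measure ℝ) [IsProbabilityMeasure P]
    (hsupp : P (Set.Icc 0 1) = 1) (hself : SelfSim P)
    (n : ℕ) (hn : 2 ≤ n) (α : Set ℝ) (hα : IsOptimal P n α) :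
    (α ∩ Set.Icc (0 : ℝ) (1 / 3)).Nonempty ∧ (α ∩ Set.Icc (2 / 3 : ℝ) 1).Nonempty ∧
    (∀ a ∈ α ∩ Set.Icc (0 : ℝ) (1 / 3), voronoi α a ∩ Set.Icc (2 / 3 : ℝ) 1 = ∅) ∧
    (∀ a ∈ α ∩ Set.Icc (2 / 3 : ℝ) 1, voronoi α a ∩ Set.Icc (0 : ℝ) (1 / 3) = ∅) := by
  classical
  obtain ⟨hfin, hneα, hcard, hopt⟩ := hα
  have hpair_fin : ({1/6, 5/6} : Set ℝ).Finite := (Set.finite_singleton _).insert _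
  have hpair_ne : ({1/6, 5/6} : Set ℝ).Nonempty := ⟨1/6, Set.mem_insert _ _⟩
  -- upper bound on the optimal error
  have hub : err P {(1/6:ℝ), 5/6} ≤ 1/72 := by
    have hle : ∀ᵐ x ∂P, QAux.phi {(1/6:ℝ), 5/6} x ≤
        Set.indicator (Icc (0:ℝ) (1/3)) (fun y => (y-(1/6:ℝ))^2) x
        + Set.indicator (Icc (2/3:ℝ) 1) (fun y => (y-(5/6:ℝ))^2) x := by
      filter_upwards [QAux.ae_mem_LR P hsupp hself] with x hx
      rcases hx with hxL | hxR
      · rw [Set.indicator_of_mem hxL, Set.indicator_of_notMem (fun hc => by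
          have h1 := hxL.2
          have h2 := hc.1
          norm_num at h1 h2
          linarith), add_zero]
        exact QAux.phi_le hpair_fin (Set.mem_insert _ _) x
      · rw [Set.indicator_of_notMem (fun hc => by
          have h1 := hxR.1
          have h2 := hc.2
          norm_num at h1 h2
          linarith), Set.indicator_of_mem hxR, zero_add]
        exact QAux.phi_le hpair_fin (Set.mem_insert_of_mem _ rfl) x
    have h2 : err P {(1/6:ℝ), 5/6} ≤ ∫ x,
        (Set.indicator (Icc (0:ℝ) (1/3)) (fun y => (y-(1/6:ℝ))^2) x
        + Set.indicator (Icc (2/3:ℝ) 1) (fun y => (y-(5/6:ℝ))^2) x) ∂P := by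
      rw [QAux.err_def]
      exact integral_mono_ae (QAux.phi_integrable hpair_fin hpair_ne P hsupp)
        ((QAux.integrable_ind_cont P 0 (1/3) _ (by continuity)).add
          (QAux.integrable_ind_cont P (2/3) 1 _ (by continuity))) hle
    rw [integral_add (QAux.integrable_ind_cont P 0 (1/3) _ (by continuity))
      (QAux.integrable_ind_cont P (2/3) 1 _ (by continuity)),
      QAux.int_left P hsupp hself (1/6), QAux.int_right P hsupp hself (5/6)] at h2
    norm_num at h2
    linarith
  have herrU : err P α ≤ 1/72 := by
    rw [hopt]
    refine le_trans (QAux.quantErr_le P n hpair_fin hpair_ne ?_) hub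
    rw [Set.ncard_pair (by norm_num : (1/6:ℝ) ≠ 5/6)]
    exact hn
  -- lower bound helpers
  have lower_left : ∀ p : ℝ, (∀ x ∈ Icc (0:ℝ) (1/3), ∀ a ∈ α, (x - p)^2 ≤ (x - a)^2) →
      1/2*(1/24 - p/3 + p^2) ≤ err P α := by
    intro p hp
    rw [← QAux.int_left P hsupp hself p, QAux.err_def]
    apply integral_mono (QAux.integrable_ind_cont P 0 (1/3) _ (by continuity))
      (QAux.phi_integrable hfin hneα P hsupp)
    intro x
    by_cases hx : x ∈ Icc (0:ℝ) (1/3)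
    · rw [Set.indicator_of_mem hx]
      exact QAux.le_phi hneα (fun a ha => hp x hx a ha)
    · rw [Set.indicator_of_notMem hx]
      exact QAux.phi_nonneg _ _
  have lower_right : ∀ p : ℝ, (∀ x ∈ Icc (2/3:ℝ) 1, ∀ a ∈ α, (x - p)^2 ≤ (x - a)^2) →
      1/48 - (1-p)/6 + (1-p)^2/2 ≤ err P α := by
    intro p hp
    rw [← QAux.int_right P hsupp hself p, QAux.err_def]
    apply integral_mono (QAux.integrable_ind_cont P (2/3) 1 _ (by continuity))
      (QAux.phi_integrable hfin hneα P hsupp)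
    intro x
    by_cases hx : x ∈ Icc (2/3:ℝ) 1
    · rw [Set.indicator_of_mem hx]
      exact QAux.le_phi hneα (fun a ha => hp x hx a ha)
    · rw [Set.indicator_of_notMem hx]
      exact QAux.phi_nonneg _ _
  -- Claim 1
  have claim1 : (α ∩ Set.Icc (0:ℝ) (1/3)).Nonempty := by
    by_contra hKO
    have hnotin : ∀ a ∈ α, a ∉ Icc (0:ℝ) (1/3) := by
      intro a ha hmem
      exact hKO ⟨a, ha, hmem⟩
    by_cases hneg : ∃ a ∈ α, a < 0
    · obtain ⟨a₀, ha₀, ha₀neg⟩ := hneg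
      by_cases hne' : (α \ {a₀}).Nonempty
      · exact QAux.clamp_or_remove P hsupp hself hfin hneα hcard hopt ha₀ hne' 0
          (fun x hx => by nlinarith [hx.1, hx.2])
      · rw [Set.not_nonempty_iff_eq_empty, Set.diff_eq_empty] at hne'
        have hlow := lower_right (2/3) (by
          intro x hx a ha
          have haa : a = a₀ := hne' ha
          subst haa
          nlinarith [hx.1, hx.2])
        norm_num at hlow
        linarith
    · push_neg at hneg
      have hgt : ∀ a ∈ α, 1/3 < a := by
        intro a ha
        rcases lt_or_ge (1/3:ℝ) a with h | h
        · exact h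
        · exact absurd (mem_Icc.mpr ⟨hneg a ha, h⟩) (hnotin a ha)
      have hlow := lower_left (1/3)
        (fun x hx a ha => by nlinarith [hx.1, hx.2, hgt a ha])
      norm_num at hlow
      linarith
  -- Claim 2
  have claim2 : (α ∩ Set.Icc (2/3:ℝ) 1).Nonempty := by
    by_contra hKO
    have hnotin : ∀ a ∈ α, a ∉ Icc (2/3:ℝ) 1 := by
      intro a ha hmem
      exact hKO ⟨a, ha, hmem⟩
    by_cases hbig : ∃ a ∈ α, 1 < a
    · obtain ⟨a₀, ha₀, ha₀big⟩ := hbig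
      by_cases hne' : (α \ {a₀}).Nonempty
      · exact QAux.clamp_or_remove P hsupp hself hfin hneα hcard hopt ha₀ hne' 1
          (fun x hx => by nlinarith [hx.1, hx.2])
      · rw [Set.not_nonempty_iff_eq_empty, Set.diff_eq_empty] at hne'
        have hlow := lower_left (1/3) (by
          intro x hx a ha
          have haa : a = a₀ := hne' ha
          subst haa
          nlinarith [hx.1, hx.2])
        norm_num at hlow
        linarith
    · push_neg at hbig
      have hlt : ∀ a ∈ α, a < 2/3 := by
        intro a ha
        rcases lt_or_ge a (2/3:ℝ) with h | h
        · exact h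
        · exact absurd (mem_Icc.mpr ⟨h, hbig a ha⟩) (hnotin a ha)
      have hlow := lower_right (2/3)
        (fun x hx a ha => by nlinarith [hx.1, hx.2, hlt a ha])
      norm_num at hlow
      linarith
  -- Claim 3
  have claim3 : ∀ a ∈ α ∩ Set.Icc (0:ℝ) (1/3),
      voronoi α a ∩ Set.Icc (2/3:ℝ) 1 = ∅ := by
    rintro a ⟨haα, haL⟩
    rw [Set.eq_empty_iff_forall_notMem]
    rintro x ⟨hxV, hxR⟩
    have hxV' : ∀ c ∈ α, |x - a| ≤ |x - c| := hxV
    obtain ⟨b, hbα, hbR⟩ := claim2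
    have hv := hxV' b hbα
    have hxb : |x - b| ≤ 1/3 := abs_le.mpr
      ⟨by linarith [hxR.1, hbR.2], by linarith [hxR.2, hbR.1]⟩
    have habs : |x - a| = x - a := abs_of_nonneg (by linarith [hxR.1, haL.2])
    have hx23 : x = 2/3 := by
      rcases haL with ⟨h1, h2⟩
      rcases hxR with ⟨h3, h4⟩
      linarith [hv, hxb, habs]
    have ha13 : a = 1/3 := by
      rcases haL with ⟨h1, h2⟩
      rcases hxR with ⟨h3, h4⟩
      linarith [hv, hxb, habs]
    have hall : ∀ c ∈ α, c ≤ 1/3 ∨ 1 ≤ c := by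
      intro c hc
      have h := hxV' c hc
      rw [hx23, ha13] at h
      have heq : |(2/3:ℝ) - 1/3| = 1/3 := by norm_num
      rw [heq] at h
      rcases abs_cases ((2/3:ℝ) - c) with ⟨he, _⟩ | ⟨he, _⟩
      · left; linarith
      · right; linarith
    have hlow := lower_right 1 (by
      intro y hy c hc
      rcases hall c hc with h | h
      · nlinarith [hy.1, hy.2]
      · nlinarith [hy.2])
    norm_num at hlow
    linarith
  -- Claim 4
  have claim4 : ∀ a ∈ α ∩ Set.Icc (2/3:ℝ) 1,
      voronoi α a ∩ Set.Icc (0:ℝ) (1/3) = ∅ := by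
    rintro a ⟨haα, haR⟩
    rw [Set.eq_empty_iff_forall_notMem]
    rintro x ⟨hxV, hxL⟩
    have hxV' : ∀ c ∈ α, |x - a| ≤ |x - c| := hxV
    obtain ⟨b, hbα, hbL⟩ := claim1
    have hv := hxV' b hbα
    have hxb : |x - b| ≤ 1/3 := abs_le.mpr
      ⟨by linarith [hxL.1, hbL.2], by linarith [hxL.2, hbL.1]⟩
    have habs : |x - a| = a - x := by
      rw [abs_sub_comm]
      exact abs_of_nonneg (by linarith [hxL.2, haR.1])
    have hx13 : x = 1/3 := by
      rcases haR with ⟨h1, h2⟩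
      rcases hxL with ⟨h3, h4⟩
      linarith [hv, hxb, habs]
    have ha23 : a = 2/3 := by
      rcases haR with ⟨h1, h2⟩
      rcases hxL with ⟨h3, h4⟩
      linarith [hv, hxb, habs]
    have hall : ∀ c ∈ α, c ≤ 0 ∨ 2/3 ≤ c := by
      intro c hc
      have h := hxV' c hc
      rw [hx13, ha23] at h
      have heq : |(1/3:ℝ) - 2/3| = 1/3 := by norm_num
      rw [heq] at h
      rcases abs_cases ((1/3:ℝ) - c) with ⟨he, _⟩ | ⟨he, _⟩
      · left; linarith
      · right; linarith
    have hlow := lower_left 0 (by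
      intro y hy c hc
      rcases hall c hc with h | h
      · nlinarith [hy.1, hy.2]
      · nlinarith [hy.1, hy.2])
    norm_num at hlow
    linarith
  exact ⟨claim1, claim2, claim3, claim4⟩

end
end

section
/- For a ∈ [0,1/3), let F(a) = ∫_{[0,1/3]} min((x−a)², (x−1/3)²) dP(x) be the distortion error on J_1 = [0,1/3] due to the two points a and 1/3. Then F attains its minimum over a ∈ [0,1/3) uniquely at a = 1/18, and the minimum value is F(1/18) = 1/648. -/
open MeasureTheory Set
open scoped ENNReal

noncomputable section

/-! ### Auxiliary lemmas -/

section Aux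

lemma smap_cont (j : ℕ) : Continuous (Smap j) := by
  unfold Smap; fun_prop

lemma smap_meas (j : ℕ) : Measurable (Smap j) := (smap_cont j).measurable

lemma smap1 (x : ℝ) : Smap 1 x = x / 3 := by
  norm_num [Smap]

lemma smap11 (x : ℝ) : Smap 1 (Smap 1 x) = x / 9 := by
  norm_num [Smap]; ring

lemma smap_succ (j : ℕ) (x : ℝ) : Smap (j + 1) x = x / 3 ^ (j + 1) + 1 - 1 / 3 ^ j := by
  simp [Smap]

lemma geom_shift {r s : ℝ} (h0 : 0 ≤ r) (h1 : r < 1) (hs : r * (1 - r)⁻¹ = s) :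
    HasSum (fun j : ℕ => r ^ (j + 1)) s := by
  have h := (hasSum_geometric_of_lt_one h0 h1).mul_left r
  rw [hs] at h
  have he : (fun j : ℕ => r ^ (j + 1)) = fun j : ℕ => r * r ^ j := by
    funext j; rw [pow_succ]; ring
  rw [he]; exact h

lemma geom_shift2 {r s : ℝ} (h0 : 0 ≤ r) (h1 : r < 1) (hs : r ^ 2 * (1 - r)⁻¹ = s) :
    HasSum (fun j : ℕ => r ^ (j + 2)) s := by
  have h := (hasSum_geometric_of_lt_one h0 h1).mul_left (r ^ 2)
  rw [hs] at h
  have he : (fun j : ℕ => r ^ (j + 2)) = fun j : ℕ => r ^ 2 * r ^ j := by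
    funext j; ring
  rw [he]; exact h

variable {P : Measure ℝ} [IsProbabilityMeasure P]

lemma null_compl (hsupp : P (Set.Icc 0 1) = 1) : P (Set.Icc (0 : ℝ) 1)ᶜ = 0 := by
  rw [measure_compl measurableSet_Icc (measure_ne_top P _), hsupp, measure_univ]
  simp

lemma ae_mem (hsupp : P (Set.Icc 0 1) = 1) : ∀ᵐ x ∂P, x ∈ Set.Icc (0 : ℝ) 1 := by
  rw [ae_iff]
  simpa [Set.compl_def] using null_compl hsupp

lemma integ (hsupp : P (Set.Icc 0 1) = 1) (f : ℝ → ℝ) (hf : Continuous f) :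
    Integrable f P := by
  rw [← Measure.restrict_eq_self_of_ae_mem (ae_mem hsupp)]
  exact hf.continuousOn.integrableOn_compact isCompact_Icc

lemma int_quad (hsupp : P (Set.Icc 0 1) = 1) (c2 c1 c0 : ℝ) :
    ∫ x, (c2 * x ^ 2 + c1 * x + c0) ∂P
      = c2 * (∫ x, x ^ 2 ∂P) + c1 * (∫ x, x ∂P) + c0 := by
  have i2 : Integrable (fun x : ℝ => x ^ 2) P := integ hsupp _ (by fun_prop)
  have i1 : Integrable (fun x : ℝ => x) P := integ hsupp _ continuous_id
  have hb : Integrable (fun x : ℝ => c2 * x ^ 2) P := i2.const_mul c2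
  have hc : Integrable (fun x : ℝ => c1 * x) P := i1.const_mul c1
  have ha : Integrable (fun x : ℝ => c2 * x ^ 2 + c1 * x) P := hb.add hc
  rw [integral_add ha (integrable_const c0), integral_add hb hc, integral_const_mul,
    integral_const_mul, integral_const]
  simp

lemma hasSum_int (hsupp : P (Set.Icc 0 1) = 1) (hself : SelfSim P) (f : ℝ → ℝ)
    (hf : Continuous f) :
    HasSum (fun j : ℕ => (2 : ℝ)⁻¹ ^ (j + 1) * ∫ x, f (Smap (j + 1) x) ∂P) (∫ x, f x ∂P) := by
  have hint : Integrable f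
      (Measure.sum fun j : ℕ => ((2 : ℝ≥0∞) ^ (j + 1))⁻¹ • P.map (Smap (j + 1))) := by
    rw [← hself]; exact integ hsupp f hf
  have h := hasSum_integral_measure hint
  rw [← hself] at h
  have he : ∀ j : ℕ, ∫ x, f x ∂(((2 : ℝ≥0∞) ^ (j + 1))⁻¹ • P.map (Smap (j + 1)))
      = (2 : ℝ)⁻¹ ^ (j + 1) * ∫ x, f (Smap (j + 1) x) ∂P := by
    intro j
    rw [integral_smul_measure,
      integral_map (smap_meas (j + 1)).aemeasurable hf.aestronglyMeasurable, smul_eq_mul]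
    congr 1
    rw [ENNReal.toReal_inv, ENNReal.toReal_pow, inv_pow]
    norm_num
  simp only [he] at h
  exact h

lemma mom1 (hsupp : P (Set.Icc 0 1) = 1) (hself : SelfSim P) : ∫ x, x ∂P = 1 / 2 := by
  set E := ∫ x, x ∂P with hE
  have key : ∀ j : ℕ, ∫ x, Smap (j + 1) x ∂P
      = (3 : ℝ)⁻¹ ^ (j + 1) * E + (1 - 3 * (3 : ℝ)⁻¹ ^ (j + 1)) := by
    intro j
    have e : (fun x : ℝ => Smap (j + 1) x)
        = fun x => 0 * x ^ 2 + (3 : ℝ)⁻¹ ^ (j + 1) * x + (1 - 3 * (3 : ℝ)⁻¹ ^ (j + 1)) := by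
      funext x
      rw [smap_succ]
      have h3 : (3 : ℝ) ^ j ≠ 0 := by positivity
      have h3' : (3 : ℝ) ^ (j + 1) ≠ 0 := by positivity
      simp only [inv_pow]
      field_simp
      ring
    rw [e, int_quad hsupp, ← hE]
    ring
  have h := hasSum_int hsupp hself (fun x => x) continuous_id
  simp only [key] at h
  have hfe : (fun j : ℕ =>
        (2 : ℝ)⁻¹ ^ (j + 1) * ((3 : ℝ)⁻¹ ^ (j + 1) * E + (1 - 3 * (3 : ℝ)⁻¹ ^ (j + 1))))
      = fun j : ℕ => (E - 3) * (6 : ℝ)⁻¹ ^ (j + 1) + (2 : ℝ)⁻¹ ^ (j + 1) := by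
    funext j
    have e6 : (6 : ℝ)⁻¹ ^ (j + 1) = (2 : ℝ)⁻¹ ^ (j + 1) * (3 : ℝ)⁻¹ ^ (j + 1) := by
      rw [← mul_pow]; norm_num
    rw [e6]; ring
  rw [hfe] at h
  have g6 := geom_shift (r := (6 : ℝ)⁻¹) (s := 1 / 5) (by norm_num) (by norm_num) (by norm_num)
  have g2 := geom_shift (r := (2 : ℝ)⁻¹) (s := 1) (by norm_num) (by norm_num) (by norm_num)
  have h2 := (g6.mul_left (E - 3)).add g2
  have := h.unique h2
  linarith

lemma mom2 (hsupp : P (Set.Icc 0 1) = 1) (hself : SelfSim P) : ∫ x, x ^ 2 ∂P = 3 / 8 := by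
  set M := ∫ x, x ^ 2 ∂P with hM
  have hE := mom1 hsupp hself
  have key : ∀ j : ℕ, ∫ x, (Smap (j + 1) x) ^ 2 ∂P
      = (3 : ℝ)⁻¹ ^ (j + 1) * (3 : ℝ)⁻¹ ^ (j + 1) * M
        + (1 - 3 * (3 : ℝ)⁻¹ ^ (j + 1)) * (3 : ℝ)⁻¹ ^ (j + 1)
        + (1 - 3 * (3 : ℝ)⁻¹ ^ (j + 1)) ^ 2 := by
    intro j
    have e : (fun x : ℝ => (Smap (j + 1) x) ^ 2)
        = fun x => ((3 : ℝ)⁻¹ ^ (j + 1) * (3 : ℝ)⁻¹ ^ (j + 1)) * x ^ 2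
            + (2 * (1 - 3 * (3 : ℝ)⁻¹ ^ (j + 1)) * (3 : ℝ)⁻¹ ^ (j + 1)) * x
            + (1 - 3 * (3 : ℝ)⁻¹ ^ (j + 1)) ^ 2 := by
      funext x
      rw [smap_succ]
      have h3 : (3 : ℝ) ^ j ≠ 0 := by positivity
      have h3' : (3 : ℝ) ^ (j + 1) ≠ 0 := by positivity
      simp only [inv_pow]
      field_simp
      ring
    rw [e, int_quad hsupp, ← hM, hE]
    ring
  have h := hasSum_int hsupp hself (fun x => x ^ 2) (by fun_prop)
  simp only [key] at h
  have hfe : (fun j : ℕ =>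
        (2 : ℝ)⁻¹ ^ (j + 1) *
          ((3 : ℝ)⁻¹ ^ (j + 1) * (3 : ℝ)⁻¹ ^ (j + 1) * M
            + (1 - 3 * (3 : ℝ)⁻¹ ^ (j + 1)) * (3 : ℝ)⁻¹ ^ (j + 1)
            + (1 - 3 * (3 : ℝ)⁻¹ ^ (j + 1)) ^ 2))
      = fun j : ℕ => ((M + 6) * (18 : ℝ)⁻¹ ^ (j + 1) - 5 * (6 : ℝ)⁻¹ ^ (j + 1))
          + (2 : ℝ)⁻¹ ^ (j + 1) := by
    funext j
    have e6 : (6 : ℝ)⁻¹ ^ (j + 1) = (2 : ℝ)⁻¹ ^ (j + 1) * (3 : ℝ)⁻¹ ^ (j + 1) := by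
      rw [← mul_pow]; norm_num
    have e18 : (18 : ℝ)⁻¹ ^ (j + 1)
        = (2 : ℝ)⁻¹ ^ (j + 1) * ((3 : ℝ)⁻¹ ^ (j + 1) * (3 : ℝ)⁻¹ ^ (j + 1)) := by
      rw [← mul_pow, ← mul_pow]; norm_num
    rw [e6, e18]; ring
  rw [hfe] at h
  have g18 := geom_shift (r := (18 : ℝ)⁻¹) (s := 1 / 17) (by norm_num) (by norm_num) (by norm_num)
  have g6 := geom_shift (r := (6 : ℝ)⁻¹) (s := 1 / 5) (by norm_num) (by norm_num) (by norm_num)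
  have g2 := geom_shift (r := (2 : ℝ)⁻¹) (s := 1) (by norm_num) (by norm_num) (by norm_num)
  have h2 := ((g18.mul_left (M + 6)).sub (g6.mul_left 5)).add g2
  have := h.unique h2
  linarith

lemma pow3_ge (j : ℕ) : (3 : ℝ) ≤ 3 ^ (j + 1) := by
  calc (3 : ℝ) = 3 ^ 1 := (pow_one 3).symm
  _ ≤ 3 ^ (j + 1) := by
    apply pow_le_pow_right₀ (by norm_num)
    omega

lemma smap_mem (j : ℕ) {x : ℝ} (hx : x ∈ Set.Icc (0 : ℝ) 1) :
    Smap (j + 2) x ∈ Set.Icc (2 / 3 : ℝ) 1 := by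
  obtain ⟨h0, h1⟩ := hx
  rw [show j + 2 = (j + 1) + 1 from rfl, smap_succ]
  have hA : (3 : ℝ) ≤ 3 ^ (j + 1) := pow3_ge j
  have hA0 : (0 : ℝ) < 3 ^ (j + 1) := by positivity
  constructor
  · have e1 : 1 / (3 : ℝ) ^ (j + 1) ≤ 1 / 3 := by
      apply one_div_le_one_div_of_le (by norm_num) hA
    have e2 : 0 ≤ x / 3 ^ (j + 1 + 1) := by positivity
    linarith
  · have hx3 : x / 3 ^ (j + 1 + 1) ≤ 1 / 3 ^ (j + 1) := by
      rw [pow_succ, div_le_div_iff₀ (by positivity) hA0]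
      nlinarith
    linarith

lemma smap_ae (hsupp : P (Set.Icc 0 1) = 1) (j : ℕ) :
    ∀ᵐ x ∂P, Smap (j + 2) x ∈ Set.Icc (2 / 3 : ℝ) 1 :=
  (ae_mem hsupp).mono fun _ hx => smap_mem j hx

lemma restrict_third (hsupp : P (Set.Icc 0 1) = 1) (hself : SelfSim P) :
    P.restrict (Set.Icc 0 (1 / 3 : ℝ)) = (2 : ℝ≥0∞)⁻¹ • P.map (Smap 1) := by
  conv_lhs => rw [hself]
  rw [Measure.restrict_sum _ measurableSet_Icc]
  have h0 : (P.map (Smap 1)).restrict (Set.Icc 0 (1 / 3 : ℝ)) = P.map (Smap 1) := by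
    apply Measure.restrict_eq_self_of_ae_mem
    refine (ae_map_iff (smap_meas 1).aemeasurable measurableSet_Icc).mpr ?_
    refine (ae_mem hsupp).mono fun x hx => ?_
    obtain ⟨hx0, hx1⟩ := hx
    rw [smap1]
    constructor <;> [positivity; linarith]
  have hz : ∀ j : ℕ, (P.map (Smap (j + 1 + 1))).restrict (Set.Icc 0 (1 / 3 : ℝ)) = 0 := by
    intro j
    rw [Measure.restrict_eq_zero, Measure.map_apply (smap_meas _) measurableSet_Icc]
    refine measure_mono_null ?_ (null_compl hsupp)
    intro x hx
    obtain ⟨hx0, hx1⟩ := hx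
    intro hmem
    have h := (smap_mem j hmem).1
    rw [show j + 2 = j + 1 + 1 from rfl] at h
    linarith
  ext s hs
  rw [Measure.sum_apply _ hs, tsum_eq_zero_add' ENNReal.summable]
  have e0 : (((2 : ℝ≥0∞) ^ (0 + 1))⁻¹ • P.map (Smap (0 + 1))).restrict
      (Set.Icc 0 (1 / 3 : ℝ)) s = ((2 : ℝ≥0∞)⁻¹ • P.map (Smap 1)) s := by
    rw [Measure.restrict_smul, Measure.smul_apply, Measure.smul_apply, h0]
    norm_num
  have ez : ∀ j : ℕ, (((2 : ℝ≥0∞) ^ (j + 1 + 1))⁻¹ • P.map (Smap (j + 1 + 1))).restrict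
      (Set.Icc 0 (1 / 3 : ℝ)) s = 0 := by
    intro j
    rw [Measure.restrict_smul, hz j]
    simp
  simp only [ez, e0, tsum_zero, add_zero]

lemma restrict_right (hsupp : P (Set.Icc 0 1) = 1) (hself : SelfSim P) :
    P.restrict (Set.Icc (2 / 3 : ℝ) 1)
      = Measure.sum fun j : ℕ => ((2 : ℝ≥0∞) ^ (j + 2))⁻¹ • P.map (Smap (j + 2)) := by
  conv_lhs => rw [hself]
  rw [Measure.restrict_sum _ measurableSet_Icc]
  have h0 : (P.map (Smap 1)).restrict (Set.Icc (2 / 3 : ℝ) 1) = 0 := by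
    rw [Measure.restrict_eq_zero, Measure.map_apply (smap_meas _) measurableSet_Icc]
    refine measure_mono_null ?_ (null_compl hsupp)
    intro x hx
    obtain ⟨hx0, hx1⟩ := hx
    rw [smap1] at hx0 hx1
    intro hmem
    obtain ⟨h0', h1'⟩ := hmem
    linarith
  have hr : ∀ j : ℕ, (P.map (Smap (j + 1 + 1))).restrict (Set.Icc (2 / 3 : ℝ) 1)
      = P.map (Smap (j + 2)) := by
    intro j
    rw [show j + 1 + 1 = j + 2 from rfl]
    apply Measure.restrict_eq_self_of_ae_mem
    exact (ae_map_iff (smap_meas _).aemeasurable measurableSet_Icc).mpr (smap_ae hsupp j)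
  ext s hs
  rw [Measure.sum_apply _ hs, Measure.sum_apply _ hs, tsum_eq_zero_add' ENNReal.summable]
  have e0 : (((2 : ℝ≥0∞) ^ (0 + 1))⁻¹ • P.map (Smap (0 + 1))).restrict
      (Set.Icc (2 / 3 : ℝ) 1) s = 0 := by
    rw [Measure.restrict_smul, h0]
    simp
  rw [e0, zero_add]
  refine tsum_congr fun j => ?_
  rw [Measure.restrict_smul, Measure.smul_apply, hr j, Measure.smul_apply,
    show j + 1 + 1 = j + 2 from rfl]

lemma preim_third : Smap 1 ⁻¹' Set.Icc 0 (1 / 9 : ℝ) = Set.Icc 0 (1 / 3 : ℝ) := by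
  ext x
  simp only [Set.mem_preimage, smap1, Set.mem_Icc]
  constructor <;> rintro ⟨h1, h2⟩ <;> constructor <;> linarith

lemma preim_mid : Smap 1 ⁻¹' Set.Icc (2 / 9 : ℝ) (1 / 3) = Set.Icc (2 / 3 : ℝ) 1 := by
  ext x
  simp only [Set.mem_preimage, smap1, Set.mem_Icc]
  constructor <;> rintro ⟨h1, h2⟩ <;> constructor <;> linarith

lemma preim_small : Smap 1 ⁻¹' Set.Icc (2 / 9 : ℝ) (7 / 27) = Set.Icc (2 / 3 : ℝ) (7 / 9) := by
  ext x
  simp only [Set.mem_preimage, smap1, Set.mem_Icc]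
  constructor <;> rintro ⟨h1, h2⟩ <;> constructor <;> linarith

lemma restrict_ninth (hsupp : P (Set.Icc 0 1) = 1) (hself : SelfSim P) :
    P.restrict (Set.Icc 0 (1 / 9 : ℝ))
      = (2 : ℝ≥0∞)⁻¹ • (P.restrict (Set.Icc 0 (1 / 3 : ℝ))).map (Smap 1) := by
  have h1 : P.restrict (Set.Icc 0 (1 / 9 : ℝ))
      = (P.restrict (Set.Icc 0 (1 / 3 : ℝ))).restrict (Set.Icc 0 (1 / 9)) := by
    rw [Measure.restrict_restrict measurableSet_Icc,
      Set.inter_eq_self_of_subset_left (Set.Icc_subset_Icc le_rfl (by norm_num))]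
  rw [h1, restrict_third hsupp hself, Measure.restrict_smul,
    Measure.restrict_map (smap_meas 1) measurableSet_Icc, preim_third,
    ← restrict_third hsupp hself]

lemma restrict_mid (hsupp : P (Set.Icc 0 1) = 1) (hself : SelfSim P) :
    P.restrict (Set.Icc (2 / 9 : ℝ) (1 / 3))
      = (2 : ℝ≥0∞)⁻¹ • (P.restrict (Set.Icc (2 / 3 : ℝ) 1)).map (Smap 1) := by
  have h1 : P.restrict (Set.Icc (2 / 9 : ℝ) (1 / 3))
      = (P.restrict (Set.Icc 0 (1 / 3 : ℝ))).restrict (Set.Icc (2 / 9) (1 / 3)) := by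
    rw [Measure.restrict_restrict measurableSet_Icc,
      Set.inter_eq_self_of_subset_left (Set.Icc_subset_Icc (by norm_num) le_rfl)]
  rw [h1, restrict_third hsupp hself, Measure.restrict_smul,
    Measure.restrict_map (smap_meas 1) measurableSet_Icc, preim_mid]

lemma int_third (hsupp : P (Set.Icc 0 1) = 1) (hself : SelfSim P) (f : ℝ → ℝ)
    (hf : Continuous f) :
    ∫ x in Set.Icc 0 (1 / 3 : ℝ), f x ∂P = (1 / 2) * ∫ x, f (Smap 1 x) ∂P := by
  rw [restrict_third hsupp hself, integral_smul_measure,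
    integral_map (smap_meas 1).aemeasurable hf.aestronglyMeasurable, smul_eq_mul]
  congr 1
  rw [ENNReal.toReal_inv]
  norm_num

lemma int_ninth (hsupp : P (Set.Icc 0 1) = 1) (hself : SelfSim P) (f : ℝ → ℝ)
    (hf : Continuous f) :
    ∫ x in Set.Icc 0 (1 / 9 : ℝ), f x ∂P = (1 / 4) * ∫ x, f (x / 9) ∂P := by
  rw [restrict_ninth hsupp hself, integral_smul_measure,
    integral_map (smap_meas 1).aemeasurable hf.aestronglyMeasurable, smul_eq_mul,
    int_third hsupp hself (fun x => f (Smap 1 x)) (hf.comp (smap_cont 1))]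
  have he : (fun x => f (Smap 1 (Smap 1 x))) = fun x : ℝ => f (x / 9) := by
    funext x; rw [smap11]
  rw [he, ENNReal.toReal_inv]
  norm_num
  ring

lemma int_mid (hsupp : P (Set.Icc 0 1) = 1) (hself : SelfSim P) (f : ℝ → ℝ)
    (hf : Continuous f) :
    ∫ x in Set.Icc (2 / 9 : ℝ) (1 / 3), f x ∂P
      = (1 / 2) * ∫ x in Set.Icc (2 / 3 : ℝ) 1, f (Smap 1 x) ∂P := by
  rw [restrict_mid hsupp hself, integral_smul_measure,
    integral_map (smap_meas 1).aemeasurable hf.aestronglyMeasurable, smul_eq_mul,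
    ENNReal.toReal_inv]
  norm_num

lemma hasSum_right (hsupp : P (Set.Icc 0 1) = 1) (hself : SelfSim P) (f : ℝ → ℝ)
    (hf : Continuous f) :
    HasSum (fun j : ℕ => (2 : ℝ)⁻¹ ^ (j + 2) * ∫ x, f (Smap (j + 2) x) ∂P)
      (∫ x in Set.Icc (2 / 3 : ℝ) 1, f x ∂P) := by
  have hint : Integrable f
      (Measure.sum fun j : ℕ => ((2 : ℝ≥0∞) ^ (j + 2))⁻¹ • P.map (Smap (j + 2))) := by
    rw [← restrict_right hsupp hself]
    exact (integ hsupp f hf).restrict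
  have h := hasSum_integral_measure hint
  rw [← restrict_right hsupp hself] at h
  have he : ∀ j : ℕ, ∫ x, f x ∂(((2 : ℝ≥0∞) ^ (j + 2))⁻¹ • P.map (Smap (j + 2)))
      = (2 : ℝ)⁻¹ ^ (j + 2) * ∫ x, f (Smap (j + 2) x) ∂P := by
    intro j
    rw [integral_smul_measure,
      integral_map (smap_meas (j + 2)).aemeasurable hf.aestronglyMeasurable, smul_eq_mul]
    congr 1
    rw [ENNReal.toReal_inv, ENNReal.toReal_pow, inv_pow]
    norm_num
  simp only [he] at h
  exact h

lemma KRval (hsupp : P (Set.Icc 0 1) = 1) (hself : SelfSim P) :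
    ∫ x in Set.Icc (2 / 3 : ℝ) 1, (x - 1) ^ 2 ∂P = 1 / 48 := by
  have h := hasSum_right hsupp hself (fun x => (x - 1) ^ 2) (by fun_prop)
  have key : ∀ j : ℕ, ∫ x, (Smap (j + 2) x - 1) ^ 2 ∂P
      = (3 : ℝ)⁻¹ ^ (j + 2) * (3 : ℝ)⁻¹ ^ (j + 2) * (51 / 8) := by
    intro j
    have e : (fun x : ℝ => (Smap (j + 2) x - 1) ^ 2)
        = fun x => ((3 : ℝ)⁻¹ ^ (j + 2) * (3 : ℝ)⁻¹ ^ (j + 2)) * x ^ 2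
            + (-(6 * ((3 : ℝ)⁻¹ ^ (j + 2) * (3 : ℝ)⁻¹ ^ (j + 2)))) * x
            + 9 * ((3 : ℝ)⁻¹ ^ (j + 2) * (3 : ℝ)⁻¹ ^ (j + 2)) := by
      funext x
      rw [show j + 2 = (j + 1) + 1 from rfl, smap_succ]
      have h3 : (3 : ℝ) ^ (j + 1) ≠ 0 := by positivity
      have h3' : (3 : ℝ) ^ (j + 1 + 1) ≠ 0 := by positivity
      simp only [inv_pow]
      field_simp
      ring
    rw [e, int_quad hsupp, mom1 hsupp hself, mom2 hsupp hself]
    ring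
  simp only [key] at h
  have hfe : (fun j : ℕ =>
        (2 : ℝ)⁻¹ ^ (j + 2) * ((3 : ℝ)⁻¹ ^ (j + 2) * (3 : ℝ)⁻¹ ^ (j + 2) * (51 / 8)))
      = fun j : ℕ => (51 / 8 : ℝ) * (18 : ℝ)⁻¹ ^ (j + 2) := by
    funext j
    have e18 : (18 : ℝ)⁻¹ ^ (j + 2)
        = (2 : ℝ)⁻¹ ^ (j + 2) * ((3 : ℝ)⁻¹ ^ (j + 2) * (3 : ℝ)⁻¹ ^ (j + 2)) := by
      rw [← mul_pow, ← mul_pow]; norm_num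
    rw [e18]; ring
  rw [hfe] at h
  have g := geom_shift2 (r := (18 : ℝ)⁻¹) (s := 1 / 306) (by norm_num) (by norm_num) (by norm_num)
  have h2 := g.mul_left (51 / 8 : ℝ)
  have hv := h.unique h2
  rw [hv]
  norm_num

lemma Kval (hsupp : P (Set.Icc 0 1) = 1) (hself : SelfSim P) :
    ∫ x in Set.Icc (2 / 9 : ℝ) (1 / 3), (x - 1 / 3) ^ 2 ∂P = 1 / 864 := by
  rw [int_mid hsupp hself (fun x => (x - 1 / 3) ^ 2) (by fun_prop)]
  have e : (fun x : ℝ => (Smap 1 x - 1 / 3) ^ 2) = fun x : ℝ => (1 / 9) * (x - 1) ^ 2 := by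
    funext x; rw [smap1]; ring
  calc (1 / 2) * ∫ x in Set.Icc (2 / 3 : ℝ) 1, (Smap 1 x - 1 / 3) ^ 2 ∂P
      = (1 / 2) * ∫ x in Set.Icc (2 / 3 : ℝ) 1, (1 / 9) * (x - 1) ^ 2 ∂P := by rw [e]
    _ = (1 / 2) * ((1 / 9) * ∫ x in Set.Icc (2 / 3 : ℝ) 1, (x - 1) ^ 2 ∂P) := by
        rw [integral_const_mul]
    _ = 1 / 864 := by rw [KRval hsupp hself]; norm_num

lemma T1val (hsupp : P (Set.Icc 0 1) = 1) (hself : SelfSim P) (a : ℝ) :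
    ∫ x in Set.Icc (0 : ℝ) (1 / 9), (x - a) ^ 2 ∂P
      = (1 / 4) * (a ^ 2 - a / 9 + 1 / 216) := by
  rw [int_ninth hsupp hself (fun x => (x - a) ^ 2) (by fun_prop)]
  have e : (fun x : ℝ => (x / 9 - a) ^ 2)
      = fun x : ℝ => (1 / 81) * x ^ 2 + (-(2 * a / 9)) * x + a ^ 2 := by
    funext x; ring
  calc (1 / 4) * ∫ x, (x / 9 - a) ^ 2 ∂P
      = (1 / 4) * ∫ x, ((1 / 81) * x ^ 2 + (-(2 * a / 9)) * x + a ^ 2) ∂P := by rw [e]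
    _ = (1 / 4) * (a ^ 2 - a / 9 + 1 / 216) := by
        rw [int_quad hsupp, mom1 hsupp hself, mom2 hsupp hself]; ring

lemma gap_null (hsupp : P (Set.Icc 0 1) = 1) (hself : SelfSim P) :
    P (Set.Ioo (1 / 9 : ℝ) (2 / 9)) = 0 := by
  have hmain : P (Set.Ioo (1 / 3 : ℝ) (2 / 3)) = 0 := by
    conv_lhs => rw [hself]
    rw [Measure.sum_apply _ measurableSet_Ioo, ENNReal.tsum_eq_zero]
    intro j
    rw [Measure.smul_apply, Measure.map_apply (smap_meas _) measurableSet_Ioo,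
      measure_mono_null ?_ (null_compl hsupp), smul_zero]
    intro x hx
    obtain ⟨hx1, hx2⟩ := hx
    intro hmem
    obtain ⟨h0, h1⟩ := hmem
    match j with
    | 0 =>
      rw [smap1] at hx1
      linarith
    | j + 1 =>
      have h := (smap_mem j ⟨h0, h1⟩).1
      rw [show j + 2 = j + 1 + 1 from rfl] at h
      linarith
  have h1 : P (Set.Ioo (1 / 9 : ℝ) (2 / 9))
      = (P.restrict (Set.Icc 0 (1 / 3 : ℝ))) (Set.Ioo (1 / 9) (2 / 9)) := by
    rw [Measure.restrict_apply measurableSet_Ioo,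
      Set.inter_eq_self_of_subset_left ?_]
    intro x hx
    obtain ⟨hx1, hx2⟩ := hx
    exact ⟨by linarith, by linarith⟩
  have hpre : Smap 1 ⁻¹' Set.Ioo (1 / 9 : ℝ) (2 / 9) = Set.Ioo (1 / 3 : ℝ) (2 / 3) := by
    ext x
    simp only [Set.mem_preimage, smap1, Set.mem_Ioo]
    constructor <;> rintro ⟨u, v⟩ <;> constructor <;> linarith
  rw [h1, restrict_third hsupp hself, Measure.smul_apply,
    Measure.map_apply (smap_meas 1) measurableSet_Ioo, hpre, hmain, smul_zero]

lemma mass_lb (hsupp : P (Set.Icc 0 1) = 1) (hself : SelfSim P) :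
    (1 / 8 : ℝ) ≤ (P (Set.Icc (2 / 9 : ℝ) (7 / 27))).toReal := by
  have hpre2 : Smap 2 ⁻¹' Set.Icc (2 / 3 : ℝ) (7 / 9) = Set.Icc (0 : ℝ) 1 := by
    ext x
    have hv : Smap 2 x = x / 9 + 2 / 3 := by simp [Smap]; linarith
    simp only [Set.mem_preimage, hv, Set.mem_Icc]
    constructor <;> rintro ⟨u, v⟩ <;> constructor <;> linarith
  have h2 : (4 : ℝ≥0∞)⁻¹ ≤ P (Set.Icc (2 / 3 : ℝ) (7 / 9)) := by
    have hle : ((2 : ℝ≥0∞) ^ (1 + 1))⁻¹ • P.map (Smap (1 + 1)) ≤ P := by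
      conv_rhs => rw [hself]
      exact Measure.le_sum _ 1
    have h := hle (Set.Icc (2 / 3 : ℝ) (7 / 9))
    rw [Measure.smul_apply, Measure.map_apply (smap_meas 2) measurableSet_Icc, hpre2,
      hsupp, smul_eq_mul, mul_one] at h
    calc (4 : ℝ≥0∞)⁻¹ = ((2 : ℝ≥0∞) ^ (1 + 1))⁻¹ := by norm_num
      _ ≤ _ := h
  have h3 : P (Set.Icc (2 / 9 : ℝ) (7 / 27)) = 2⁻¹ * P (Set.Icc (2 / 3 : ℝ) (7 / 9)) := by
    have hs : P (Set.Icc (2 / 9 : ℝ) (7 / 27))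
        = (P.restrict (Set.Icc (2 / 9 : ℝ) (1 / 3))) (Set.Icc (2 / 9) (7 / 27)) := by
      rw [Measure.restrict_apply measurableSet_Icc,
        Set.inter_eq_self_of_subset_left (Set.Icc_subset_Icc le_rfl (by norm_num))]
    rw [hs, restrict_mid hsupp hself, Measure.smul_apply,
      Measure.map_apply (smap_meas 1) measurableSet_Icc, preim_small,
      Measure.restrict_apply measurableSet_Icc,
      Set.inter_eq_self_of_subset_left (Set.Icc_subset_Icc le_rfl (by norm_num)), smul_eq_mul]
  have h4 : (8 : ℝ≥0∞)⁻¹ ≤ P (Set.Icc (2 / 9 : ℝ) (7 / 27)) := by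
    rw [h3]
    calc (8 : ℝ≥0∞)⁻¹ = 2⁻¹ * 4⁻¹ := by
          rw [show (8 : ℝ≥0∞) = 2 * 4 by norm_num, ENNReal.mul_inv (by simp) (by simp)]
      _ ≤ 2⁻¹ * P (Set.Icc (2 / 3 : ℝ) (7 / 9)) := mul_le_mul_right h2 _
  have h5 := ENNReal.toReal_mono (measure_ne_top P _) h4
  calc (1 / 8 : ℝ) = ((8 : ℝ≥0∞)⁻¹).toReal := by norm_num [ENNReal.toReal_inv]
    _ ≤ _ := h5

lemma int_split (hsupp : P (Set.Icc 0 1) = 1) (hself : SelfSim P) (f : ℝ → ℝ)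
    (hf : Continuous f) :
    ∫ x in Set.Icc (0 : ℝ) (1 / 3), f x ∂P
      = (∫ x in Set.Icc (0 : ℝ) (1 / 9), f x ∂P)
        + ∫ x in Set.Icc (2 / 9 : ℝ) (1 / 3), f x ∂P := by
  have hset : Set.Icc (0 : ℝ) (1 / 3)
      = (Set.Icc 0 (1 / 9) ∪ Set.Ioo (1 / 9) (2 / 9)) ∪ Set.Icc (2 / 9) (1 / 3) := by
    ext x
    simp only [Set.mem_Icc, Set.mem_Ioo, Set.mem_union]
    constructor
    · rintro ⟨h0, h3⟩
      rcases le_or_gt x (1 / 9) with h | h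
      · exact Or.inl (Or.inl ⟨h0, h⟩)
      · rcases lt_or_ge x (2 / 9) with h' | h'
        · exact Or.inl (Or.inr ⟨h, h'⟩)
        · exact Or.inr ⟨h', h3⟩
    · rintro ((⟨u, v⟩ | ⟨u, v⟩) | ⟨u, v⟩) <;> constructor <;> linarith
  have d1 : Disjoint (Set.Icc (0 : ℝ) (1 / 9) ∪ Set.Ioo (1 / 9) (2 / 9))
      (Set.Icc (2 / 9 : ℝ) (1 / 3)) := by
    rw [Set.disjoint_left]
    rintro x (⟨u, v⟩ | ⟨u, v⟩) ⟨u', v'⟩ <;> linarith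
  have d2 : Disjoint (Set.Icc (0 : ℝ) (1 / 9)) (Set.Ioo (1 / 9 : ℝ) (2 / 9)) := by
    rw [Set.disjoint_left]
    rintro x ⟨u, v⟩ ⟨u', v'⟩
    linarith
  rw [hset, setIntegral_union d1 measurableSet_Icc ((integ hsupp f hf).integrableOn)
    ((integ hsupp f hf).integrableOn),
    setIntegral_union d2 measurableSet_Ioo ((integ hsupp f hf).integrableOn)
    ((integ hsupp f hf).integrableOn),
    show P.restrict (Set.Ioo (1 / 9 : ℝ) (2 / 9)) = 0 from
      Measure.restrict_eq_zero.mpr (gap_null hsupp hself),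
    integral_zero_measure, add_zero]

end Aux
theorem two_point_error_on_J1 (P : Measure ℝ) [IsProbabilityMeasure P]
    (hsupp : P (Set.Icc 0 1) = 1) (hself : SelfSim P) :
    (∫ x in Set.Icc (0 : ℝ) (1 / 3), min ((x - 1 / 18) ^ 2) ((x - 1 / 3) ^ 2) ∂P) = 1 / 648 ∧
    ∀ a ∈ Set.Ico (0 : ℝ) (1 / 3), a ≠ 1 / 18 →
      1 / 648 < ∫ x in Set.Icc (0 : ℝ) (1 / 3), min ((x - a) ^ 2) ((x - 1 / 3) ^ 2) ∂P := by
  have hmc : ∀ a : ℝ, Continuous fun x : ℝ => min ((x - a) ^ 2) ((x - 1 / 3) ^ 2) := by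
    intro a; fun_prop
  have hT1 : ∀ a : ℝ, 0 ≤ a → a < 1 / 3 →
      (∫ x in Set.Icc (0 : ℝ) (1 / 9), min ((x - a) ^ 2) ((x - 1 / 3) ^ 2) ∂P)
        = (1 / 4) * (a ^ 2 - a / 9 + 1 / 216) := by
    intro a h0 h3
    have e1 : ∫ x in Set.Icc (0 : ℝ) (1 / 9), min ((x - a) ^ 2) ((x - 1 / 3) ^ 2) ∂P
        = ∫ x in Set.Icc (0 : ℝ) (1 / 9), (x - a) ^ 2 ∂P := by
      apply setIntegral_congr_fun measurableSet_Icc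
      intro x hx
      obtain ⟨hx0, hx1⟩ := hx
      have hh : (0:ℝ) ≤ (1/3 - a) * (a + 1/3 - 2*x) := mul_nonneg (by linarith) (by linarith)
      exact min_eq_left (by nlinarith [hh])
    rw [e1, T1val hsupp hself a]
  have hT2small : ∀ a : ℝ, 0 ≤ a → a ≤ 1 / 9 →
      (∫ x in Set.Icc (2 / 9 : ℝ) (1 / 3), min ((x - a) ^ 2) ((x - 1 / 3) ^ 2) ∂P)
        = 1 / 864 := by
    intro a h0 h9
    have e2 : ∫ x in Set.Icc (2 / 9 : ℝ) (1 / 3), min ((x - a) ^ 2) ((x - 1 / 3) ^ 2) ∂P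
        = ∫ x in Set.Icc (2 / 9 : ℝ) (1 / 3), (x - 1 / 3) ^ 2 ∂P := by
      apply setIntegral_congr_fun measurableSet_Icc
      intro x hx
      obtain ⟨hx0, hx1⟩ := hx
      have hh : (0:ℝ) ≤ (1/3 - a) * (2*x - a - 1/3) := mul_nonneg (by linarith) (by linarith)
      exact min_eq_right (by nlinarith [hh])
    rw [e2, Kval hsupp hself]
  constructor
  · rw [int_split hsupp hself _ (hmc (1/18)), hT1 (1/18) (by norm_num) (by norm_num),
      hT2small (1/18) (by norm_num) (by norm_num)]
    norm_num
  · rintro a ⟨ha0, ha3⟩ hne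
    rw [int_split hsupp hself _ (hmc a), hT1 a ha0 ha3]
    rcases le_or_gt a (1/9) with hc | hc
    · rw [hT2small a ha0 hc]
      have hd : a - 1/18 ≠ 0 := sub_ne_zero.mpr hne
      have hp : 0 < (a - 1/18)^2 := by
        rcases hd.lt_or_gt with h | h <;> nlinarith
      nlinarith [hp]
    · rcases le_or_gt a (1/6) with hc2 | hc2
      · have hmono : (∫ x in Set.Icc (2/9:ℝ) (7/27), min ((x - a) ^ 2) ((x - 1 / 3) ^ 2) ∂P)
            ≤ ∫ x in Set.Icc (2/9:ℝ) (1/3), min ((x - a) ^ 2) ((x - 1 / 3) ^ 2) ∂P := by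
          apply setIntegral_mono_set ((integ hsupp _ (hmc a)).integrableOn)
            (ae_of_all _ fun x => le_min (sq_nonneg _) (sq_nonneg _))
            ((Set.Icc_subset_Icc le_rfl (by norm_num)).eventuallyLE)
        have hconst : (1/324 : ℝ) * (P (Set.Icc (2/9:ℝ) (7/27))).toReal
            ≤ ∫ x in Set.Icc (2/9:ℝ) (7/27), min ((x - a) ^ 2) ((x - 1 / 3) ^ 2) ∂P := by
          rw [mul_comm, ← smul_eq_mul]
          apply setIntegral_ge_of_const_le measurableSet_Icc (measure_ne_top P _)
          · intro x hx
            obtain ⟨hx0, hx1⟩ := hx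
            refine le_min ?_ ?_
            · have hh : (0:ℝ) ≤ (x - a - 1/18) * (x - a + 1/18) :=
                mul_nonneg (by linarith) (by linarith)
              nlinarith [hh]
            · have hh : (0:ℝ) ≤ (1/3 - x - 1/18) * (1/3 - x + 1/18) :=
                mul_nonneg (by linarith) (by linarith)
              nlinarith [hh]
          · exact (integ hsupp _ (hmc a)).integrableOn
        have hm := mass_lb hsupp hself
        have hT2 : (1/2592 : ℝ)
            ≤ ∫ x in Set.Icc (2/9:ℝ) (1/3), min ((x - a) ^ 2) ((x - 1/3) ^ 2) ∂P := by
          linarith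
        nlinarith [hT2, mul_pos (show (0:ℝ) < a by linarith) (show (0:ℝ) < a - 1/9 by linarith)]
      · have hT2 : (0:ℝ)
            ≤ ∫ x in Set.Icc (2/9:ℝ) (1/3), min ((x - a) ^ 2) ((x - 1/3) ^ 2) ∂P :=
          setIntegral_nonneg measurableSet_Icc fun x _ => le_min (sq_nonneg _) (sq_nonneg _)
        nlinarith [hT2, sq_nonneg (a - 1/6)]

end
end

section
/- Let α be an optimal set of three-means for P. Then either α = {1/18, 5/18, 5/6} or α = {1/6, 13/18, 17/18}, and in both cases the third quantization error is V_3 = 5/648. -/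
open MeasureTheory Set
open scoped ENNReal

noncomputable section

namespace CQ

def s0 (x : ℝ) : ℝ := x / 3
def s1 (x : ℝ) : ℝ := x / 3 + 2 / 3

lemma s0_cont : Continuous s0 := by unfold s0; fun_prop
lemma s1_cont : Continuous s1 := by unfold s1; fun_prop
lemma s0_meas : Measurable s0 := s0_cont.measurable
lemma s1_meas : Measurable s1 := s1_cont.measurable

def J0 : Set ℝ := Icc 0 (1/3)
def J1 : Set ℝ := Icc (2/3) 1

lemma s0_pre (a b : ℝ) : s0 ⁻¹' (Icc a b) = Icc (3*a) (3*b) := by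
  ext x
  simp only [s0, mem_preimage, mem_Icc]
  constructor <;> rintro ⟨h1, h2⟩ <;> constructor <;> linarith

lemma s1_pre (a b : ℝ) : s1 ⁻¹' (Icc a b) = Icc (3*a-2) (3*b-2) := by
  ext x
  simp only [s1, mem_preimage, mem_Icc]
  constructor <;> rintro ⟨h1, h2⟩ <;> constructor <;> linarith

variable {μ : Measure ℝ} [IsProbabilityMeasure μ]

lemma compl_null (h1 : μ (Icc (0:ℝ) 1) = 1) : μ (Icc (0:ℝ) 1)ᶜ = 0 := by
  rw [measure_compl measurableSet_Icc (measure_ne_top μ _), h1, measure_univ, tsub_self]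

lemma ae_mem (h1 : μ (Icc (0:ℝ) 1) = 1) : ∀ᵐ x ∂μ, x ∈ Icc (0:ℝ) 1 := by
  rw [ae_iff]
  convert compl_null h1 using 2
  rfl

lemma integrable_cont (h1 : μ (Icc (0:ℝ) 1) = 1) {f : ℝ → ℝ} (hf : Continuous f) :
    Integrable f μ := by
  set g : ℝ → ℝ := fun x => f (max 0 (min x 1)) with hg
  have hgc : Continuous g := hf.comp (continuous_const.max (continuous_id.min continuous_const))
  have hrange : ∀ x, g x ∈ f '' (Icc (0:ℝ) 1) := by
    intro x
    refine ⟨max 0 (min x 1), ?_, rfl⟩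
    constructor
    · exact le_max_left _ _
    · exact max_le (by norm_num) (min_le_right _ _)
  obtain ⟨r, hr⟩ := (isCompact_Icc.image hf).isBounded.subset_closedBall 0
  have hgint : Integrable g μ := by
    refine Integrable.mono' (integrable_const r) hgc.aestronglyMeasurable ?_
    refine ae_of_all _ fun x => ?_
    have := hr (hrange x)
    simpa [Metric.mem_closedBall, Real.dist_eq] using this
  refine hgint.congr ?_
  filter_upwards [ae_mem h1] with x hx
  have : max 0 (min x 1) = x := by
    rw [min_eq_left hx.2, max_eq_right hx.1]
  rw [hg]; simp [this]


section S2
variable {μ : Measure ℝ} [IsProbabilityMeasure μ]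
-- new material
lemma null_of_disj (h1 : μ (Icc (0:ℝ) 1) = 1) {s : Set ℝ} (h : s ⊆ (Icc (0:ℝ) 1)ᶜ) :
    μ s = 0 :=
  measure_mono_null h (compl_null h1)

lemma RJ0 (h1 : μ (Icc (0:ℝ) 1) = 1)
    (hm : μ = (2:ℝ≥0∞)⁻¹ • μ.map s0 + (2:ℝ≥0∞)⁻¹ • μ.map s1) :
    μ.restrict J0 = (2:ℝ≥0∞)⁻¹ • μ.map s0 := by
  have hz : (μ.map s1) J0 = 0 := by
    unfold J0
    rw [Measure.map_apply s1_meas measurableSet_Icc]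
    refine null_of_disj h1 ?_
    rw [s1_pre]
    intro x hx
    simp only [mem_Icc] at hx
    simp only [mem_compl_iff, mem_Icc, not_and_or, not_le]
    left; linarith [hx.2]
  have hfull : (μ.map s0).restrict J0 = μ.map s0 := by
    unfold J0
    refine Measure.restrict_eq_self_of_ae_mem ?_
    simp only [mem_Icc]
    rw [ae_map_iff s0_meas.aemeasurable (measurableSet_Icc (a := (0:ℝ)) (b := 1/3))]
    filter_upwards [ae_mem h1] with x hx
    simp only [s0, J0, mem_Icc] at *
    constructor <;> linarith [hx.1, hx.2]
  conv_lhs => rw [hm]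
  rw [Measure.restrict_add, Measure.restrict_smul, Measure.restrict_smul, hfull,
    Measure.restrict_eq_zero.2 hz, smul_zero, add_zero]

lemma RJ1 (h1 : μ (Icc (0:ℝ) 1) = 1)
    (hm : μ = (2:ℝ≥0∞)⁻¹ • μ.map s0 + (2:ℝ≥0∞)⁻¹ • μ.map s1) :
    μ.restrict J1 = (2:ℝ≥0∞)⁻¹ • μ.map s1 := by
  have hz : (μ.map s0) J1 = 0 := by
    unfold J1
    rw [Measure.map_apply s0_meas measurableSet_Icc]
    refine null_of_disj h1 ?_
    rw [s0_pre]
    intro x hx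
    simp only [mem_Icc] at hx
    simp only [mem_compl_iff, mem_Icc, not_and_or, not_le]
    right; linarith [hx.1]
  have hfull : (μ.map s1).restrict J1 = μ.map s1 := by
    unfold J1
    refine Measure.restrict_eq_self_of_ae_mem ?_
    simp only [mem_Icc]
    rw [ae_map_iff s1_meas.aemeasurable (measurableSet_Icc (a := (2/3:ℝ)) (b := 1))]
    filter_upwards [ae_mem h1] with x hx
    simp only [s1, J1, mem_Icc] at *
    constructor <;> linarith [hx.1, hx.2]
  conv_lhs => rw [hm]
  rw [Measure.restrict_add, Measure.restrict_smul, Measure.restrict_smul, hfull,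
    Measure.restrict_eq_zero.2 hz, smul_zero, zero_add]

lemma setint_J0 (h1 : μ (Icc (0:ℝ) 1) = 1)
    (hm : μ = (2:ℝ≥0∞)⁻¹ • μ.map s0 + (2:ℝ≥0∞)⁻¹ • μ.map s1)
    {f : ℝ → ℝ} (hf : Continuous f) :
    ∫ x in J0, f x ∂μ = (1/2) * ∫ x, f (s0 x) ∂μ := by
  rw [RJ0 h1 hm, integral_smul_measure,
    integral_map s0_meas.aemeasurable hf.aestronglyMeasurable]
  simp [ENNReal.toReal_inv]

lemma setint_J1 (h1 : μ (Icc (0:ℝ) 1) = 1)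
    (hm : μ = (2:ℝ≥0∞)⁻¹ • μ.map s0 + (2:ℝ≥0∞)⁻¹ • μ.map s1)
    {f : ℝ → ℝ} (hf : Continuous f) :
    ∫ x in J1, f x ∂μ = (1/2) * ∫ x, f (s1 x) ∂μ := by
  rw [RJ1 h1 hm, integral_smul_measure,
    integral_map s1_meas.aemeasurable hf.aestronglyMeasurable]
  simp [ENNReal.toReal_inv]


end S2

section S3
variable {μ : Measure ℝ} [IsProbabilityMeasure μ]
-- NEW
variable (h1 : μ (Icc (0:ℝ) 1) = 1)
  (hm : μ = (2:ℝ≥0∞)⁻¹ • μ.map s0 + (2:ℝ≥0∞)⁻¹ • μ.map s1)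
include h1 hm

lemma mass_J0 : μ J0 = 2⁻¹ := by
  have := RJ0 h1 hm
  have h2 : μ.restrict J0 J0 = μ J0 := Measure.restrict_eq_self μ (subset_refl _)
  rw [this] at h2
  rw [← h2, Measure.smul_apply, smul_eq_mul]
  unfold J0
  rw [Measure.map_apply s0_meas measurableSet_Icc, s0_pre]
  norm_num
  rw [h1, mul_one]

lemma mass_J1 : μ J1 = 2⁻¹ := by
  have := RJ1 h1 hm
  have h2 : μ.restrict J1 J1 = μ J1 := Measure.restrict_eq_self μ (subset_refl _)
  rw [this] at h2
  rw [← h2, Measure.smul_apply, smul_eq_mul]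
  unfold J1
  rw [Measure.map_apply s1_meas measurableSet_Icc, s1_pre]
  norm_num
  rw [h1, mul_one]

omit h1 hm in
lemma disjJ : Disjoint J0 J1 := by
  rw [Set.disjoint_left]
  rintro x hx hx'
  simp only [J0, J1, mem_Icc] at hx hx'
  linarith [hx.2, hx'.1]

lemma union_full : μ (J0 ∪ J1) = 1 := by
  rw [measure_union disjJ measurableSet_Icc, mass_J0 h1 hm, mass_J1 h1 hm]
  rw [← ENNReal.inv_two_add_inv_two]

lemma restrict_union_eq : μ.restrict (J0 ∪ J1) = μ := by
  refine Measure.restrict_eq_self_of_ae_mem ?_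
  rw [ae_iff]
  have hms : MeasurableSet (J0 ∪ J1) := measurableSet_Icc.union measurableSet_Icc
  have hc := measure_compl hms (measure_ne_top μ (J0 ∪ J1))
  have : {x | ¬ x ∈ J0 ∪ J1} = (J0 ∪ J1)ᶜ := rfl
  rw [this, hc, union_full h1 hm, measure_univ, tsub_self]

lemma integral_split {f : ℝ → ℝ} (hf : Continuous f) :
    ∫ x, f x ∂μ = ∫ x in J0, f x ∂μ + ∫ x in J1, f x ∂μ := by
  conv_lhs => rw [← restrict_union_eq h1 hm]
  exact setIntegral_union disjJ measurableSet_Icc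
    ((integrable_cont h1 hf).integrableOn) ((integrable_cont h1 hf).integrableOn)

lemma int_m1 : ∫ x, x ∂μ = 1/2 := by
  have h := setint_J0 h1 hm (f := fun x => x) continuous_id
  have h' := setint_J1 h1 hm (f := fun x => x) continuous_id
  have hsplit := integral_split h1 hm (f := fun x => x) continuous_id
  have e0 : ∫ x, s0 x ∂μ = (1/3) * ∫ x, x ∂μ := by
    unfold s0
    rw [integral_div]
    ring
  have e1 : ∫ x, s1 x ∂μ = (1/3) * (∫ x, x ∂μ) + 2/3 := by
    unfold s1
    rw [integral_add ((integrable_cont h1 (by fun_prop))) (integrable_const _),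
      integral_div, integral_const]
    simp
    ring
  rw [h, h'] at hsplit
  simp only [s0, s1] at hsplit e0 e1
  rw [e0, e1] at hsplit
  linarith

lemma int_sq : ∫ x, x^2 ∂μ = 3/8 := by
  have h := setint_J0 h1 hm (f := fun x => x^2) (by fun_prop)
  have h' := setint_J1 h1 hm (f := fun x => x^2) (by fun_prop)
  have hsplit := integral_split h1 hm (f := fun x => x^2) (by fun_prop)
  have e0 : ∫ x, (s0 x)^2 ∂μ = (1/9) * ∫ x, x^2 ∂μ := by
    unfold s0
    have : ∀ x : ℝ, (x/3)^2 = (1/9) * x^2 := by intro x; ring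
    simp_rw [this]
    rw [integral_const_mul]
  have e1 : ∫ x, (s1 x)^2 ∂μ = (1/9) * (∫ x, x^2 ∂μ) + (4/9) * (∫ x, x ∂μ) + 4/9 := by
    unfold s1
    have : ∀ x : ℝ, (x/3 + 2/3)^2 = (1/9) * x^2 + ((4/9) * x + 4/9) := by intro x; ring
    simp_rw [this]
    rw [integral_add (by exact (integrable_cont h1 (by fun_prop)).const_mul _)
        (by exact ((integrable_cont h1 continuous_id).const_mul _).add (integrable_const _)),
      integral_add (by exact (integrable_cont h1 continuous_id).const_mul _) (integrable_const _),
      integral_const_mul, integral_const_mul, integral_const]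
    simp
    ring
  rw [h, h'] at hsplit
  simp only [s0, s1] at hsplit e0 e1
  rw [e0, e1, int_m1 h1 hm] at hsplit
  linarith

lemma int_q (a : ℝ) : ∫ x, (x - a)^2 ∂μ = 1/8 + (a - 1/2)^2 := by
  have hi2 : Integrable (fun x : ℝ => x^2) μ := integrable_cont h1 (by fun_prop)
  have hi1 : Integrable (fun x : ℝ => (2*a) * x) μ :=
    (integrable_cont h1 continuous_id).const_mul _
  have hrw : ∀ x : ℝ, (x - a)^2 = x^2 - (2*a) * x + a^2 := by intro x; ring
  have hi3 : Integrable (fun x : ℝ => x^2 - 2*a*x) μ := hi2.sub hi1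
  simp_rw [hrw]
  rw [integral_add hi3 (integrable_const (a^2)),
    integral_sub hi2 hi1, integral_const_mul, integral_const, int_sq h1 hm, int_m1 h1 hm]
  simp
  ring

lemma int_J0_q (a : ℝ) : ∫ x in J0, (x - a)^2 ∂μ = 1/144 + (1/2) * (a - 1/6)^2 := by
  rw [setint_J0 h1 hm (by fun_prop)]
  have : ∀ x : ℝ, (s0 x - a)^2 = (1/9) * (x - 3*a)^2 := by intro x; unfold s0; ring
  simp_rw [this]
  rw [integral_const_mul, int_q h1 hm]
  ring

lemma int_J1_q (a : ℝ) : ∫ x in J1, (x - a)^2 ∂μ = 1/144 + (1/2) * (a - 5/6)^2 := by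
  rw [setint_J1 h1 hm (by fun_prop)]
  have : ∀ x : ℝ, (s1 x - a)^2 = (1/9) * (x - (3*a - 2))^2 := by intro x; unfold s1; ring
  simp_rw [this]
  rw [integral_const_mul, int_q h1 hm]
  ring


end S3

section S4
variable {μ : Measure ℝ} [IsProbabilityMeasure μ]
-- NEW : the W function
def Wf (μ : Measure ℝ) (t : ℝ) : ℝ := ∫ x, max (t - x) 0 ∂μ

lemma Wf_cont (t : ℝ) : Continuous (fun x : ℝ => max (t - x) 0) := by fun_prop

lemma max_div3 (y : ℝ) : max (y/3) 0 = (max y 0)/3 := by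
  rcases le_total y 0 with h | h
  · rw [max_eq_right h, max_eq_right (by linarith)]
    norm_num
  · rw [max_eq_left h, max_eq_left (by linarith)]

variable (h1 : μ (Icc (0:ℝ) 1) = 1)
  (hm : μ = (2:ℝ≥0∞)⁻¹ • μ.map s0 + (2:ℝ≥0∞)⁻¹ • μ.map s1)

omit h1 hm in
lemma Wf_nonneg (t : ℝ) : 0 ≤ Wf μ t :=
  integral_nonneg (fun x => le_max_right _ _)

include h1 in omit hm in
lemma Wf_zero {t : ℝ} (ht : t ≤ 0) : Wf μ t = 0 := by
  unfold Wf
  have hz : (fun x : ℝ => max (t - x) 0) =ᵐ[μ] (fun _ => (0:ℝ)) := by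
    filter_upwards [ae_mem h1] with x hx
    rw [max_eq_right (by linarith [hx.1])]
  rw [integral_congr_ae hz, integral_zero]

include h1 in omit hm in
lemma Wf_le {t : ℝ} (ht : 0 ≤ t) : Wf μ t ≤ t := by
  unfold Wf
  calc ∫ x, max (t - x) 0 ∂μ ≤ ∫ _, t ∂μ := by
        refine integral_mono_ae (integrable_cont h1 (Wf_cont t)) (integrable_const t) ?_
        filter_upwards [ae_mem h1] with x hx
        exact max_le (by linarith [hx.1]) ht
    _ = t := by simp

include h1 in omit hm in
lemma Wf_mono {s t : ℝ} (hst : s ≤ t) : Wf μ s ≤ Wf μ t := by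
  refine integral_mono (integrable_cont h1 (Wf_cont s)) (integrable_cont h1 (Wf_cont t))
    fun x => ?_
  exact max_le_max (by linarith) le_rfl

include h1 hm in
lemma Wf_one : Wf μ 1 = 1/2 := by
  unfold Wf
  have : ∫ x, max (1 - x) 0 ∂μ = ∫ x, (1 - x) ∂μ := by
    refine integral_congr_ae ?_
    filter_upwards [ae_mem h1] with x hx
    rw [max_eq_left (by linarith [hx.2])]
  have hix : Integrable (fun x : ℝ => x) μ := integrable_cont h1 continuous_id
  rw [this, integral_sub (integrable_const 1) hix,
    integral_const, int_m1 h1 hm]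
  simp
  norm_num

include h1 hm in
lemma Wf_scale {t : ℝ} (ht : t ≤ 2) : Wf μ (t/3) = Wf μ t / 6 := by
  have hsplit := integral_split h1 hm (f := fun x => max (t/3 - x) 0) (Wf_cont _)
  have hJ0 : ∫ x in J0, max (t/3 - x) 0 ∂μ = (1/6) * Wf μ t := by
    rw [setint_J0 h1 hm (Wf_cont _)]
    have : ∀ x : ℝ, max (t/3 - s0 x) 0 = (max (t - x) 0)/3 := by
      intro x
      rw [show t/3 - s0 x = (t - x)/3 by unfold s0; ring, max_div3]
    simp_rw [this]
    rw [integral_div]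
    unfold Wf
    ring
  have hJ1 : ∫ x in J1, max (t/3 - x) 0 ∂μ = 0 := by
    rw [setint_J1 h1 hm (Wf_cont _)]
    have : ∫ x, max (t/3 - s1 x) 0 ∂μ = ∫ _, (0:ℝ) ∂μ := by
      refine integral_congr_ae ?_
      filter_upwards [ae_mem h1] with x hx
      rw [max_eq_right]
      unfold s1
      linarith [hx.1]
    rw [this]
    simp
  rw [show Wf μ (t/3) = ∫ x, max (t/3 - x) 0 ∂μ from rfl, hsplit, hJ0, hJ1]
  ring

include h1 hm in
lemma Wf_mid {t : ℝ} (ht1 : 1/3 ≤ t) (ht2 : t ≤ 2/3) : Wf μ t = t/2 - 1/12 := by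
  have hsplit := integral_split h1 hm (f := fun x => max (t - x) 0) (Wf_cont _)
  have hJ0 : ∫ x in J0, max (t - x) 0 ∂μ = (1/2) * (t - 1/6) := by
    rw [setint_J0 h1 hm (Wf_cont _)]
    have : ∫ x, max (t - s0 x) 0 ∂μ = ∫ x, (t - x/3) ∂μ := by
      refine integral_congr_ae ?_
      filter_upwards [ae_mem h1] with x hx
      unfold s0
      rw [max_eq_left (by linarith [hx.2])]
    have hix : Integrable (fun x : ℝ => x/3) μ := integrable_cont h1 (by fun_prop)
    rw [this, integral_sub (integrable_const t) hix, integral_const,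
      integral_div, int_m1 h1 hm]
    simp
    ring
  have hJ1 : ∫ x in J1, max (t - x) 0 ∂μ = 0 := by
    rw [setint_J1 h1 hm (Wf_cont _)]
    have : ∫ x, max (t - s1 x) 0 ∂μ = ∫ _, (0:ℝ) ∂μ := by
      refine integral_congr_ae ?_
      filter_upwards [ae_mem h1] with x hx
      rw [max_eq_right]
      unfold s1
      linarith [hx.1]
    rw [this]
    simp
  rw [show Wf μ t = ∫ x, max (t - x) 0 ∂μ from rfl, hsplit, hJ0, hJ1]
  ring

include h1 hm in
lemma Wf_high {t : ℝ} (ht1 : 2/3 ≤ t) (ht2 : t ≤ 1) : Wf μ t ≤ t/2 := by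
  have hsplit := integral_split h1 hm (f := fun x => max (t - x) 0) (Wf_cont _)
  have hJ0 : ∫ x in J0, max (t - x) 0 ∂μ = (1/2) * (t - 1/6) := by
    rw [setint_J0 h1 hm (Wf_cont _)]
    have : ∫ x, max (t - s0 x) 0 ∂μ = ∫ x, (t - x/3) ∂μ := by
      refine integral_congr_ae ?_
      filter_upwards [ae_mem h1] with x hx
      unfold s0
      rw [max_eq_left (by linarith [hx.2])]
    have hix : Integrable (fun x : ℝ => x/3) μ := integrable_cont h1 (by fun_prop)
    rw [this, integral_sub (integrable_const t) hix, integral_const,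
      integral_div, int_m1 h1 hm]
    simp
    ring
  have hJ1 : ∫ x in J1, max (t - x) 0 ∂μ ≤ 1/12 := by
    rw [setint_J1 h1 hm (Wf_cont _)]
    have heq : ∀ x : ℝ, max (t - s1 x) 0 = (max (3*t - 2 - x) 0)/3 := by
      intro x
      rw [show t - s1 x = (3*t - 2 - x)/3 by unfold s1; ring, max_div3]
    simp_rw [heq]
    rw [integral_div]
    have hW : ∫ x, max (3*t - 2 - x) 0 ∂μ = Wf μ (3*t - 2) := rfl
    rw [hW]
    have := Wf_mono (μ := μ) h1 (show 3*t - 2 ≤ 1 by linarith)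
    have h2 := Wf_one h1 hm
    linarith
  have hWt : Wf μ t = ∫ x, max (t - x) 0 ∂μ := rfl
  rw [hWt, hsplit]
  linarith [hJ0, hJ1]

include h1 hm in
lemma Wf_rep : ∀ (k : ℕ) {σ : ℝ}, 0 ≤ σ → σ ≤ 2 →
    Wf μ ((1/3)^k * σ) = (1/6)^k * Wf μ σ := by
  intro k
  induction k with
  | zero => intro σ _ _; simp
  | succ n ih =>
      intro σ h0 h2
      have harg : ((1/3:ℝ))^(n+1) * σ = ((1/3)^n * σ)/3 := by ring
      rw [harg, Wf_scale h1 hm (by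
        have hp : ((1/3:ℝ))^n ≤ 1 := pow_le_one₀ (by norm_num) (by norm_num)
        calc ((1/3:ℝ))^n * σ ≤ 1 * σ := by nlinarith
          _ ≤ 2 := by linarith), ih h0 h2]
      ring

include h1 hm in
lemma Wf_small : ∀ (k : ℕ) {t : ℝ}, t ≤ (1/3)^k → Wf μ t ≤ (1/6)^k / 2 := by
  intro k t ht
  calc Wf μ t ≤ Wf μ ((1/3)^k * 1) := Wf_mono h1 (by rw [mul_one]; exact ht)
    _ = (1/6)^k * Wf μ 1 := Wf_rep h1 hm k (by norm_num) (by norm_num)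
    _ = (1/6)^k / 2 := by rw [Wf_one h1 hm]; ring


omit h1 hm in
lemma Wf_def (t : ℝ) : Wf μ t = ∫ x, max (t - x) 0 ∂μ := rfl

include h1 hm in
lemma Wf_full {t : ℝ} (ht : 1 ≤ t) : Wf μ t = t - 1/2 := by
  unfold Wf
  have hcong : ∫ x, max (t - x) 0 ∂μ = ∫ x, (t - x) ∂μ := by
    refine integral_congr_ae ?_
    filter_upwards [ae_mem h1] with x hx
    rw [max_eq_left (by linarith [hx.2])]
  have hix : Integrable (fun x : ℝ => x) μ := integrable_cont h1 continuous_id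
  rw [hcong, integral_sub (integrable_const t) hix, integral_const, int_m1 h1 hm]
  simp

end S4

section S5
variable {μ : Measure ℝ} [IsProbabilityMeasure μ]
-- NEW
lemma exists_rep {u : ℝ} (h0 : 0 < u) (h3 : u < 1/3) :
    ∃ (k : ℕ) (σ : ℝ), 1 ≤ k ∧ 1/3 ≤ σ ∧ σ ≤ 1 ∧ u = (1/3)^k * σ := by
  obtain ⟨n, hn⟩ := exists_pow_lt_of_lt_one h0 (by norm_num : (1/3:ℝ) < 1)
  have hP : ∃ m, ((1/3:ℝ))^m < u := ⟨n, hn⟩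
  classical
  set m := Nat.find hP with hmdef
  have hspec : ((1/3:ℝ))^m < u := Nat.find_spec hP
  have hm1 : 1 ≤ m := by
    rcases Nat.eq_zero_or_pos m with h | h
    · exfalso
      rw [h] at hspec
      norm_num at hspec
      linarith
    · exact h
  set k := m - 1 with hk
  have hmk : m = k + 1 := by omega
  have hup : u ≤ (1/3:ℝ)^k := by
    by_contra hcon
    push_neg at hcon
    have := Nat.find_min hP (show k < m by omega)
    exact this hcon
  have hlow : (1/3:ℝ)^(k+1) < u := by rw [← hmk]; exact hspec
  refine ⟨k, u * 3^k, ?_, ?_, ?_, ?_⟩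
  · -- 1 ≤ k
    rcases Nat.eq_zero_or_pos k with h | h
    · exfalso
      rw [h] at hlow
      norm_num at hlow
      linarith
    · exact h
  · -- 1/3 ≤ σ
    have h3k : (0:ℝ) < 3^k := by positivity
    have hiv : ((1/3:ℝ))^(k+1) = (3^(k+1):ℝ)⁻¹ := by
      rw [one_div, inv_pow]
    rw [hiv] at hlow
    have key : ((3:ℝ)^(k+1))⁻¹ * 3^k = 1/3 := by
      rw [pow_succ]
      field_simp
    nlinarith [mul_lt_mul_of_pos_right hlow h3k]
  · -- σ ≤ 1
    have h3k : (0:ℝ) < 3^k := by positivity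
    have : ((1/3:ℝ))^k = (3^k:ℝ)⁻¹ := by rw [one_div, inv_pow]
    rw [this] at hup
    calc u * 3^k ≤ (3^k:ℝ)⁻¹ * 3^k := by nlinarith
      _ = 1 := by field_simp
  · -- u = (1/3)^k * σ
    have h3k : (0:ℝ) < 3^k := by positivity
    have hiv : ((1/3:ℝ))^k = (3^k:ℝ)⁻¹ := by rw [one_div, inv_pow]
    rw [hiv]
    field_simp

variable (h1 : μ (Icc (0:ℝ) 1) = 1)
  (hm : μ = (2:ℝ≥0∞)⁻¹ • μ.map s0 + (2:ℝ≥0∞)⁻¹ • μ.map s1)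
include h1 hm in
lemma K_base (σ : ℝ) (hσ1 : 1/3 ≤ σ) (hσ2 : σ ≤ 1) :
    (2*σ+1) * Wf μ σ - 2*σ^2 ≤ 0 := by
  rcases le_total σ (2/3) with h | h
  · rw [Wf_mid h1 hm hσ1 h]
    nlinarith [sq_nonneg (σ - 1/6)]
  · have hW := Wf_high h1 hm h hσ2
    have hco : (0:ℝ) ≤ 2*σ+1 := by linarith
    nlinarith [mul_le_mul_of_nonneg_left hW hco]

include h1 hm in
lemma K_le : ∀ u : ℝ, 0 ≤ u → (2*u+1) * Wf μ u - 2*u^2 ≤ 7/17496 := by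
  intro u hu
  rcases le_or_gt 1 u with h | h
  · rw [Wf_full h1 hm h]; nlinarith
  rcases le_or_gt (1/3) u with h' | h'
  · have := K_base h1 hm u h' (le_of_lt h)
    linarith
  rcases eq_or_lt_of_le hu with h0 | h0
  · rw [← h0, Wf_zero h1 le_rfl]; norm_num
  obtain ⟨k, σ, hk1, hσ1, hσ2, hrep⟩ := exists_rep h0 h'
  have hWrep : Wf μ u = (1/6)^k * Wf μ σ := by
    rw [hrep]; exact Wf_rep h1 hm k (by linarith) (by linarith)
  have hWnn : 0 ≤ Wf μ σ := Wf_nonneg (μ := μ) σ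
  have hWhalf : Wf μ σ ≤ 1/2 := by
    have := Wf_mono h1 (show σ ≤ 1 from hσ2)
    rw [Wf_one h1 hm] at this
    exact this
  -- case on k
  match k, hk1 with
  | 1, _ =>
      rw [hrep] at *
      norm_num at hWrep ⊢
      rcases le_total σ (2/3) with hc | hc
      · rw [Wf_mid h1 hm hσ1 hc] at hWrep
        rw [hWrep]
        nlinarith
      · have hW := Wf_high h1 hm hc hσ2
        rw [hWrep]
        nlinarith
  | 2, _ =>
      rw [hrep] at *
      norm_num at hWrep ⊢
      rcases le_total σ (2/3) with hc | hc
      · rw [Wf_mid h1 hm hσ1 hc] at hWrep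
        rw [hWrep]
        nlinarith
      · have hW := Wf_high h1 hm hc hσ2
        rw [hWrep]
        nlinarith
  | 3, _ =>
      rw [hrep] at *
      norm_num at hWrep ⊢
      rcases le_total σ (2/3) with hc | hc
      · rw [Wf_mid h1 hm hσ1 hc] at hWrep
        rw [hWrep]
        nlinarith
      · have hW := Wf_high h1 hm hc hσ2
        rw [hWrep]
        nlinarith
  | (n+4), _ =>
      have hp : ((1/3:ℝ))^(n+4) ≤ 1/81 := by
        calc ((1/3:ℝ))^(n+4) ≤ (1/3)^4 :=
              pow_le_pow_of_le_one (by norm_num) (by norm_num) (by omega)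
          _ = 1/81 := by norm_num
      have hq : ((1/6:ℝ))^(n+4) ≤ 1/1296 := by
        calc ((1/6:ℝ))^(n+4) ≤ (1/6)^4 :=
              pow_le_pow_of_le_one (by norm_num) (by norm_num) (by omega)
          _ = 1/1296 := by norm_num
      have hppos : (0:ℝ) < (1/3)^(n+4) := by positivity
      have hqpos : (0:ℝ) < (1/6)^(n+4) := by positivity
      have hu1 : u ≤ 1/81 := by
        rw [hrep]
        calc ((1/3:ℝ))^(n+4) * σ ≤ (1/3)^(n+4) * 1 := by nlinarith
          _ ≤ 1/81 := by rw [mul_one]; exact hp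
      have hWu : Wf μ u ≤ 1/2592 := by
        rw [hWrep]
        calc ((1/6:ℝ))^(n+4) * Wf μ σ ≤ (1/6)^(n+4) * (1/2) := by nlinarith
          _ ≤ 1/2592 := by nlinarith
      have h2u : 2*u + 1 ≤ 83/81 := by linarith
      have hWu0 : 0 ≤ Wf μ u := Wf_nonneg (μ := μ) u
      have hmm := mul_le_mul h2u hWu hWu0 (by norm_num : (0:ℝ) ≤ 83/81)
      have hc : (83/81:ℝ)*(1/2592) ≤ 7/17496 := by norm_num
      linarith [sq_nonneg u]


end S5

section S6
variable {μ : Measure ℝ} [IsProbabilityMeasure μ]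
lemma q_mono {b c x : ℝ} (hbc : b ≤ c) (h : b + c ≤ 2*x) : (x-c)^2 ≤ (x-b)^2 := by nlinarith
lemma q_mono' {b c x : ℝ} (hbc : b ≤ c) (h : 2*x ≤ b + c) : (x-b)^2 ≤ (x-c)^2 := by nlinarith

def F2 (μ : Measure ℝ) (u v : ℝ) : ℝ := ∫ x, min ((x-u)^2) ((x-v)^2) ∂μ

lemma cont_min2 (u v : ℝ) : Continuous (fun x : ℝ => min ((x-u)^2) ((x-v)^2)) := by fun_prop

lemma min2_nonneg (u v x : ℝ) : 0 ≤ min ((x-u)^2) ((x-v)^2) :=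
  le_min (sq_nonneg _) (sq_nonneg _)

variable (h1 : μ (Icc (0:ℝ) 1) = 1)
  (hm : μ = (2:ℝ≥0∞)⁻¹ • μ.map s0 + (2:ℝ≥0∞)⁻¹ • μ.map s1)
include h1 hm

-- masses (as toReal)
lemma meas_scale0 {s : Set ℝ} (hs : MeasurableSet s) (hsub : s ⊆ J0) :
    μ s = 2⁻¹ * μ (s0 ⁻¹' s) := by
  have h2 : μ.restrict J0 s = μ s := Measure.restrict_eq_self μ hsub
  rw [RJ0 h1 hm] at h2
  rw [← h2, Measure.smul_apply, smul_eq_mul, Measure.map_apply s0_meas hs]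

lemma meas_scale1 {s : Set ℝ} (hs : MeasurableSet s) (hsub : s ⊆ J1) :
    μ s = 2⁻¹ * μ (s1 ⁻¹' s) := by
  have h2 : μ.restrict J1 s = μ s := Measure.restrict_eq_self μ hsub
  rw [RJ1 h1 hm] at h2
  rw [← h2, Measure.smul_apply, smul_eq_mul, Measure.map_apply s1_meas hs]

lemma mass_J0t : (μ J0).toReal = 1/2 := by
  have : μ J0 = 2⁻¹ * μ (Icc 0 1) := by
    have := meas_scale0 h1 hm (s := J0) measurableSet_Icc (subset_refl _)
    rw [this]
    unfold J0
    rw [s0_pre]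
    norm_num
  rw [this, h1]
  simp

lemma mass_J00t : (μ (Icc (0:ℝ) (1/9))).toReal = 1/4 := by
  have hsub : Icc (0:ℝ) (1/9) ⊆ J0 := by
    unfold J0
    apply Icc_subset_Icc le_rfl
    norm_num
  have h2 : μ (Icc (0:ℝ) (1/9)) = 2⁻¹ * μ J0 := by
    rw [meas_scale0 h1 hm measurableSet_Icc hsub, s0_pre]
    norm_num
    rfl
  have h3 : μ J0 = 2⁻¹ * μ (Icc 0 1) := by
    have := meas_scale0 h1 hm (s := J0) measurableSet_Icc (subset_refl _)
    rw [this]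
    unfold J0
    rw [s0_pre]
    norm_num
  rw [h2, h3, h1, mul_one]
  simp [ENNReal.toReal_mul]
  norm_num

lemma mass_J01t : (μ (Icc (2/9:ℝ) (1/3))).toReal = 1/4 := by
  have hsub : Icc (2/9:ℝ) (1/3) ⊆ J0 := by
    unfold J0
    apply Icc_subset_Icc (by norm_num) le_rfl
  have h2 : μ (Icc (2/9:ℝ) (1/3)) = 2⁻¹ * μ J1 := by
    rw [meas_scale0 h1 hm measurableSet_Icc hsub, s0_pre]
    norm_num
    rfl
  have h3 : μ J1 = 2⁻¹ * μ (Icc 0 1) := by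
    have := meas_scale1 h1 hm (s := J1) measurableSet_Icc (subset_refl _)
    rw [this]
    unfold J1
    rw [s1_pre]
    norm_num
  rw [h2, h3, h1, mul_one]
  simp [ENNReal.toReal_mul]
  norm_num

lemma mass_J100t : (μ (Icc (2/3:ℝ) (19/27))).toReal = 1/8 := by
  have hsub : Icc (2/3:ℝ) (19/27) ⊆ J1 := by
    unfold J1
    apply Icc_subset_Icc le_rfl
    norm_num
  have h2 : μ (Icc (2/3:ℝ) (19/27)) = 2⁻¹ * μ (Icc (0:ℝ) (1/9)) := by
    rw [meas_scale1 h1 hm measurableSet_Icc hsub, s1_pre]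
    norm_num
  have h4 := mass_J00t h1 hm
  rw [h2]
  rw [ENNReal.toReal_mul]
  rw [h4]
  simp
  norm_num

lemma mass_J101t : (μ (Icc (20/27:ℝ) (7/9))).toReal = 1/8 := by
  have hsub : Icc (20/27:ℝ) (7/9) ⊆ J1 := by
    unfold J1
    apply Icc_subset_Icc (by norm_num) (by norm_num)
  have h2 : μ (Icc (20/27:ℝ) (7/9)) = 2⁻¹ * μ (Icc (2/9:ℝ) (1/3)) := by
    rw [meas_scale1 h1 hm measurableSet_Icc hsub, s1_pre]
    norm_num
  have h4 := mass_J01t h1 hm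
  rw [h2, ENNReal.toReal_mul, h4]
  simp
  norm_num

lemma mass_J1t : (μ J1).toReal = 1/2 := by
  have h3 : μ J1 = 2⁻¹ * μ (Icc 0 1) := by
    have := meas_scale1 h1 hm (s := J1) measurableSet_Icc (subset_refl _)
    rw [this]
    unfold J1
    rw [s1_pre]
    norm_num
  rw [h3, h1]
  simp

-- generic set-integral lower bound by a constant
omit hm in
lemma setint_ge_const {f : ℝ → ℝ} (hf : Continuous f) {s : Set ℝ} (hs : MeasurableSet s)
    {c : ℝ} (hc : ∀ x ∈ s, c ≤ f x) : (μ s).toReal * c ≤ ∫ x in s, f x ∂μ := by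
  have h := setIntegral_mono_on (hf := integrableOn_const (measure_ne_top _ _))
    (hg := (integrable_cont h1 hf).integrableOn) hs hc
  rwa [setIntegral_const, smul_eq_mul] at h

omit hm in
lemma int_ge_setint {f : ℝ → ℝ} (hf : Continuous f) (hnn : ∀ x, 0 ≤ f x) (s : Set ℝ) :
    ∫ x in s, f x ∂μ ≤ ∫ x, f x ∂μ :=
  setIntegral_le_integral (integrable_cont h1 hf) (ae_of_all _ hnn)

omit hm in
lemma setint_mono_subset {f : ℝ → ℝ} (hf : Continuous f) (hnn : ∀ x, 0 ≤ f x)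
    {s t : Set ℝ} (hst : s ⊆ t) : ∫ x in s, f x ∂μ ≤ ∫ x in t, f x ∂μ :=
  setIntegral_mono_set ((integrable_cont h1 hf).integrableOn)
    (ae_of_all _ hnn) (HasSubset.Subset.eventuallyLE hst)

-- the 2-means theorem
lemma F2_ge {u v : ℝ} (huv : u ≤ v) :
    1/72 ≤ F2 μ u v ∧ (F2 μ u v = 1/72 → u = 1/6 ∧ v = 5/6) := by
  have hIJ1 : ∫ x in J1, min ((x-u)^2) ((x-v)^2) ∂μ ≤ F2 μ u v :=
    int_ge_setint h1 (cont_min2 u v) (min2_nonneg u v) J1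
  have hIJ0 : ∫ x in J0, min ((x-u)^2) ((x-v)^2) ∂μ ≤ F2 μ u v :=
    int_ge_setint h1 (cont_min2 u v) (min2_nonneg u v) J0
  rcases lt_or_ge v (2/3) with hv | hv
  · -- v < 2/3 : error on J1 at least 1/48
    have hpt : ∀ x ∈ J1, (x - v)^2 ≤ min ((x-u)^2) ((x-v)^2) := by
      intro x hx
      simp only [J1, mem_Icc] at hx
      exact le_min (q_mono huv (by linarith [hx.1])) le_rfl
    have hval := int_J1_q h1 hm v
    have h48 : (1:ℝ)/48 ≤ F2 μ u v := by
      have hsq : (1:ℝ)/36 ≤ (v - 5/6)^2 := by nlinarith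
      have : ∫ x in J1, (x - v)^2 ∂μ ≤ ∫ x in J1, min ((x-u)^2) ((x-v)^2) ∂μ := by
        refine setIntegral_mono_on (hf := (integrable_cont h1 (by fun_prop)).integrableOn)
          (hg := (integrable_cont h1 (cont_min2 u v)).integrableOn) measurableSet_Icc hpt
      rw [hval] at this
      linarith
    exact ⟨by linarith, fun he => absurd he (by linarith)⟩
  rcases lt_or_ge u 0 with hu | hu
  · -- u < 0 : on J0, min at least (x-0)^2
    have hpt : ∀ x ∈ J0, (x - 0)^2 ≤ min ((x-u)^2) ((x-v)^2) := by
      intro x hx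
      simp only [J0, mem_Icc] at hx
      refine le_min (q_mono (le_of_lt hu) (by linarith [hx.1])) (q_mono' (by linarith) (by linarith [hx.2]))
    have hmon : ∫ x in J0, (x - 0)^2 ∂μ ≤ ∫ x in J0, min ((x-u)^2) ((x-v)^2) ∂μ :=
      setIntegral_mono_on (hf := (integrable_cont h1 (by fun_prop)).integrableOn)
        (hg := (integrable_cont h1 (cont_min2 u v)).integrableOn) measurableSet_Icc hpt
    have hval := int_J0_q h1 hm 0
    rw [hval] at hmon
    have : (1:ℝ)/48 ≤ F2 μ u v := by
      have : (1:ℝ)/144 + (1/2) * (0 - 1/6)^2 = 1/48 := by norm_num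
      linarith
    exact ⟨by linarith, fun he => absurd he (by linarith)⟩
  rcases lt_or_ge (1/3 : ℝ) u with hu3 | hu3
  · -- u > 1/3
    have hpt : ∀ x ∈ J0, (x - u)^2 ≤ min ((x-u)^2) ((x-v)^2) := by
      intro x hx
      simp only [J0, mem_Icc] at hx
      exact le_min le_rfl (q_mono' huv (by linarith [hx.2]))
    have hmon : ∫ x in J0, (x - u)^2 ∂μ ≤ ∫ x in J0, min ((x-u)^2) ((x-v)^2) ∂μ :=
      setIntegral_mono_on (hf := (integrable_cont h1 (by fun_prop)).integrableOn)
        (hg := (integrable_cont h1 (cont_min2 u v)).integrableOn) measurableSet_Icc hpt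
    have hval := int_J0_q h1 hm u
    rw [hval] at hmon
    have hsq : (1:ℝ)/36 ≤ (u - 1/6)^2 := by nlinarith
    have : (1:ℝ)/48 ≤ F2 μ u v := by linarith
    exact ⟨by linarith, fun he => absurd he (by linarith)⟩
  rcases lt_or_ge (4/3 - u) v with hv4 | hv4
  · -- v > 4/3 - u ≥ 1
    have hv1 : (1:ℝ) ≤ v := by linarith
    have hpt : ∀ x ∈ J1, (x - 1)^2 ≤ min ((x-u)^2) ((x-v)^2) := by
      intro x hx
      simp only [J1, mem_Icc] at hx
      refine le_min ?_ (q_mono' hv1 (by linarith [hx.2]))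
      have h13 : (x - 1/3)^2 ≤ (x - u)^2 := q_mono hu3 (by linarith [hx.1])
      nlinarith [hx.1, hx.2]
    have hmon : ∫ x in J1, (x - 1)^2 ∂μ ≤ ∫ x in J1, min ((x-u)^2) ((x-v)^2) ∂μ :=
      setIntegral_mono_on (hf := (integrable_cont h1 (by fun_prop)).integrableOn)
        (hg := (integrable_cont h1 (cont_min2 u v)).integrableOn) measurableSet_Icc hpt
    have hval := int_J1_q h1 hm 1
    rw [hval] at hmon
    have : (1:ℝ)/48 ≤ F2 μ u v := by
      have : (1:ℝ)/144 + (1/2) * (1 - 5/6)^2 = 1/48 := by norm_num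
      linarith
    exact ⟨by linarith, fun he => absurd he (by linarith)⟩
  · -- core case : 0 ≤ u ≤ 1/3, 2/3 ≤ v ≤ 4/3 - u
    have hsplit := integral_split h1 hm (f := fun x => min ((x-u)^2) ((x-v)^2)) (cont_min2 u v)
    have hc0 : ∫ x in J0, min ((x-u)^2) ((x-v)^2) ∂μ = ∫ x in J0, (x - u)^2 ∂μ := by
      refine setIntegral_congr_fun measurableSet_Icc fun x hx => ?_
      simp only [J0, mem_Icc] at hx
      exact min_eq_left (q_mono' huv (by linarith [hx.2]))
    have hc1 : ∫ x in J1, min ((x-u)^2) ((x-v)^2) ∂μ = ∫ x in J1, (x - v)^2 ∂μ := by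
      refine setIntegral_congr_fun measurableSet_Icc fun x hx => ?_
      simp only [J1, mem_Icc] at hx
      exact min_eq_right (q_mono huv (by linarith [hx.1]))
    have hF : F2 μ u v = 1/72 + (1/2) * (u - 1/6)^2 + (1/2) * (v - 5/6)^2 := by
      rw [show F2 μ u v = ∫ x, min ((x-u)^2) ((x-v)^2) ∂μ from rfl, hsplit, hc0, hc1,
        int_J0_q h1 hm u, int_J1_q h1 hm v]
      ring
    constructor
    · rw [hF]
      linarith [sq_nonneg (u - 1/6), sq_nonneg (v - 5/6)]
    · intro he
      rw [hF] at he
      have h2 : (u - 1/6)^2 = 0 := by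
        linarith [sq_nonneg (u - 1/6), sq_nonneg (v - 5/6)]
      have h3 : (v - 5/6)^2 = 0 := by
        linarith [sq_nonneg (u - 1/6), sq_nonneg (v - 5/6)]
      constructor
      · have h4 := (pow_eq_zero_iff (by norm_num : (2:ℕ) ≠ 0)).mp h2
        linarith [h4]
      · have h4 := (pow_eq_zero_iff (by norm_num : (2:ℕ) ≠ 0)).mp h3
        linarith [h4]

-- far lemma : second point at distance >= 1 from left of support
lemma F2_far {u v : ℝ} (hv : 1 ≤ v) : 43/2592 ≤ F2 μ u v := by
  have hIJ0 : ∫ x in J0, min ((x-u)^2) ((x-v)^2) ∂μ ≤ F2 μ u v :=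
    int_ge_setint h1 (cont_min2 u v) (min2_nonneg u v) J0
  rcases le_or_gt u (1/2) with hu2 | hu2
  · rcases le_or_gt (-(1/3) : ℝ) u with hu3 | hu3
    · -- main subcase : -1/3 ≤ u ≤ 1/2
      -- J0 part
      have hc0 : ∫ x in J0, min ((x-u)^2) ((x-v)^2) ∂μ = ∫ x in J0, (x - u)^2 ∂μ := by
        refine setIntegral_congr_fun measurableSet_Icc fun x hx => ?_
        simp only [J0, mem_Icc] at hx
        exact min_eq_left (q_mono' (by linarith) (by linarith [hx.2]))
      have hJ0val : (1:ℝ)/144 ≤ ∫ x in J0, min ((x-u)^2) ((x-v)^2) ∂μ := by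
        rw [hc0, int_J0_q h1 hm u]
        nlinarith [sq_nonneg (u - 1/6)]
      -- J100 part
      have hpt100 : ∀ x ∈ Icc (2/3:ℝ) (19/27), (1:ℝ)/36 ≤ min ((x-u)^2) ((x-v)^2) := by
        intro x hx
        simp only [mem_Icc] at hx
        refine le_min ?_ ?_
        · have : (x - 1/2)^2 ≤ (x - u)^2 := q_mono hu2 (by linarith [hx.1])
          nlinarith [hx.1]
        · have : (x - 1)^2 ≤ (x - v)^2 := q_mono' hv (by linarith [hx.2])
          nlinarith [hx.2]
      have hJ100 := setint_ge_const h1 (cont_min2 u v) measurableSet_Icc hpt100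
      rw [mass_J100t h1 hm] at hJ100
      -- J101 part
      have hpt101 : ∀ x ∈ Icc (20/27:ℝ) (7/9), (4:ℝ)/81 ≤ min ((x-u)^2) ((x-v)^2) := by
        intro x hx
        simp only [mem_Icc] at hx
        refine le_min ?_ ?_
        · have : (x - 1/2)^2 ≤ (x - u)^2 := q_mono hu2 (by linarith [hx.1])
          nlinarith [hx.1]
        · have : (x - 1)^2 ≤ (x - v)^2 := q_mono' hv (by linarith [hx.2])
          nlinarith [hx.2]
      have hJ101 := setint_ge_const h1 (cont_min2 u v) measurableSet_Icc hpt101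
      rw [mass_J101t h1 hm] at hJ101
      -- assemble : F2 = int_J0 + int_J1 and int_J1 >= int_J100 + int_J101
      have hsplit := integral_split h1 hm (f := fun x => min ((x-u)^2) ((x-v)^2)) (cont_min2 u v)
      have hsub : Icc (2/3:ℝ) (19/27) ∪ Icc (20/27:ℝ) (7/9) ⊆ J1 := by
        intro x hx
        rcases hx with hx | hx <;> simp only [mem_Icc] at hx <;>
          exact ⟨by linarith [hx.1], by linarith [hx.2]⟩
      have hdisj : Disjoint (Icc (2/3:ℝ) (19/27)) (Icc (20/27:ℝ) (7/9)) := by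
        rw [Set.disjoint_left]
        rintro x hx hx'
        simp only [mem_Icc] at hx hx'
        linarith [hx.2, hx'.1]
      have hunion : ∫ x in (Icc (2/3:ℝ) (19/27) ∪ Icc (20/27:ℝ) (7/9)),
          min ((x-u)^2) ((x-v)^2) ∂μ
          = (∫ x in Icc (2/3:ℝ) (19/27), min ((x-u)^2) ((x-v)^2) ∂μ)
            + ∫ x in Icc (20/27:ℝ) (7/9), min ((x-u)^2) ((x-v)^2) ∂μ :=
        setIntegral_union hdisj measurableSet_Icc
          ((integrable_cont h1 (cont_min2 u v)).integrableOn)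
          ((integrable_cont h1 (cont_min2 u v)).integrableOn)
      have hJ1ge : (1:ℝ)/8 * (1/36) + 1/8 * (4/81)
          ≤ ∫ x in J1, min ((x-u)^2) ((x-v)^2) ∂μ := by
        have hmono := setint_mono_subset h1 (cont_min2 u v) (min2_nonneg u v) hsub
        rw [hunion] at hmono
        linarith
      rw [show F2 μ u v = ∫ x, min ((x-u)^2) ((x-v)^2) ∂μ from rfl, hsplit]
      have : (1:ℝ)/144 + ((1:ℝ)/8 * (1/36) + 1/8 * (4/81)) = 43/2592 := by norm_num
      linarith
    · -- u < -1/3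
      have hpt : ∀ x ∈ J0, (1:ℝ)/9 ≤ min ((x-u)^2) ((x-v)^2) := by
        intro x hx
        simp only [J0, mem_Icc] at hx
        refine le_min ?_ ?_
        · nlinarith [hx.1]
        · nlinarith [hx.2]
      have hge := setint_ge_const h1 (cont_min2 u v) measurableSet_Icc hpt
      have hmJ0 : (μ J0).toReal = 1/2 := mass_J0t h1 hm
      rw [show Icc (0:ℝ) (1/3) = J0 from rfl] at hge
      rw [hmJ0] at hge
      linarith
  · -- u > 1/2
    have hpt00 : ∀ x ∈ Icc (0:ℝ) (1/9), (49:ℝ)/324 ≤ min ((x-u)^2) ((x-v)^2) := by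
      intro x hx
      simp only [mem_Icc] at hx
      refine le_min ?_ ?_
      · have : (x - 1/2)^2 ≤ (x - u)^2 := q_mono' (le_of_lt hu2) (by linarith [hx.2])
        nlinarith [hx.2, hx.1]
      · have : (x - 1)^2 ≤ (x - v)^2 := q_mono' hv (by linarith [hx.2])
        nlinarith [hx.2, hx.1]
    have hpt01 : ∀ x ∈ Icc (2/9:ℝ) (1/3), (1:ℝ)/36 ≤ min ((x-u)^2) ((x-v)^2) := by
      intro x hx
      simp only [mem_Icc] at hx
      refine le_min ?_ ?_
      · have : (x - 1/2)^2 ≤ (x - u)^2 := q_mono' (le_of_lt hu2) (by linarith [hx.2])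
        nlinarith [hx.2]
      · have : (x - 1)^2 ≤ (x - v)^2 := q_mono' hv (by linarith [hx.2])
        nlinarith [hx.2]
    have hJ00 := setint_ge_const h1 (cont_min2 u v) measurableSet_Icc hpt00
    rw [mass_J00t h1 hm] at hJ00
    have hJ01 := setint_ge_const h1 (cont_min2 u v) measurableSet_Icc hpt01
    rw [mass_J01t h1 hm] at hJ01
    have hsub : Icc (0:ℝ) (1/9) ∪ Icc (2/9:ℝ) (1/3) ⊆ J0 := by
      intro x hx
      rcases hx with hx | hx <;> simp only [mem_Icc] at hx <;>
        exact ⟨by linarith [hx.1], by linarith [hx.2]⟩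
    have hdisj : Disjoint (Icc (0:ℝ) (1/9)) (Icc (2/9:ℝ) (1/3)) := by
      rw [Set.disjoint_left]
      rintro x hx hx'
      simp only [mem_Icc] at hx hx'
      linarith [hx.2, hx'.1]
    have hunion : ∫ x in (Icc (0:ℝ) (1/9) ∪ Icc (2/9:ℝ) (1/3)),
        min ((x-u)^2) ((x-v)^2) ∂μ
        = (∫ x in Icc (0:ℝ) (1/9), min ((x-u)^2) ((x-v)^2) ∂μ)
          + ∫ x in Icc (2/9:ℝ) (1/3), min ((x-u)^2) ((x-v)^2) ∂μ :=
      setIntegral_union hdisj measurableSet_Icc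
        ((integrable_cont h1 (cont_min2 u v)).integrableOn)
        ((integrable_cont h1 (cont_min2 u v)).integrableOn)
    have hmono := setint_mono_subset h1 (cont_min2 u v) (min2_nonneg u v) hsub
    rw [hunion] at hmono
    have : ∫ x in J0, min ((x-u)^2) ((x-v)^2) ∂μ ≤ F2 μ u v := hIJ0
    nlinarith


end S6

section S7
variable {μ : Measure ℝ} [IsProbabilityMeasure μ]
-- NEW ---------------------------------------------------------------
lemma mul_max0 {c : ℝ} (hc : 0 ≤ c) (y : ℝ) : max (c*y) 0 = c * max y 0 := by
  rcases le_total y 0 with h | h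
  · rw [max_eq_right (by nlinarith), max_eq_right h, mul_zero]
  · rw [max_eq_left (by nlinarith), max_eq_left h]

def e3 (b1 b2 b3 x : ℝ) : ℝ := min (min ((x-b1)^2) ((x-b2)^2)) ((x-b3)^2)

def E3 (μ : Measure ℝ) (b1 b2 b3 : ℝ) : ℝ := ∫ x, e3 b1 b2 b3 x ∂μ

lemma cont_e3 (b1 b2 b3 : ℝ) : Continuous (e3 b1 b2 b3) := by unfold e3; fun_prop

lemma e3_nonneg (b1 b2 b3 x : ℝ) : 0 ≤ e3 b1 b2 b3 x :=
  le_min (le_min (sq_nonneg _) (sq_nonneg _)) (sq_nonneg _)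

variable (h1 : μ (Icc (0:ℝ) 1) = 1)
  (hm : μ = (2:ℝ≥0∞)⁻¹ • μ.map s0 + (2:ℝ≥0∞)⁻¹ • μ.map s1)
include h1 hm

lemma T_decomp {b2 b3 : ℝ} (hb : b2 ≤ b3) :
    ∫ x in J1, min ((x-b2)^2) ((x-b3)^2) ∂μ
      = 1/144 + (1/2)*(b3 - 5/6)^2 - ((b3-b2)/3) * Wf μ (3*((b2+b3)/2 - 2/3)) := by
  have hid : ∀ x : ℝ, min ((x-b2)^2) ((x-b3)^2)
      = (x-b3)^2 - (b3 - b2) * max ((b2+b3) - 2*x) 0 := by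
    intro x
    have hq : (x-b3)^2 - (x-b2)^2 = (b3 - b2) * ((b2+b3) - 2*x) := by ring
    rcases le_total ((x-b3)^2) ((x-b2)^2) with h | h
    · rw [min_eq_right h]
      have h2 : (b3 - b2) * ((b2+b3) - 2*x) ≤ 0 := by linarith
      rw [← mul_max0 (by linarith : (0:ℝ) ≤ b3 - b2), max_eq_right (by linarith)]
      ring
    · rw [min_eq_left h]
      rw [← mul_max0 (by linarith : (0:ℝ) ≤ b3 - b2), max_eq_left (by linarith)]
      linarith [hq]
  simp_rw [hid]
  have hi1 : IntegrableOn (fun x : ℝ => (x-b3)^2) J1 μ :=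
    (integrable_cont h1 (by fun_prop)).integrableOn
  have hi2 : IntegrableOn (fun x : ℝ => (b3 - b2) * max ((b2+b3) - 2*x) 0) J1 μ :=
    (integrable_cont h1 (by fun_prop)).integrableOn
  rw [integral_sub hi1 hi2, int_J1_q h1 hm b3, integral_const_mul]
  have hW : ∫ x in J1, max ((b2+b3) - 2*x) 0 ∂μ = Wf μ (3*((b2+b3)/2 - 2/3)) / 3 := by
    rw [setint_J1 h1 hm (by fun_prop)]
    have hpt : ∀ x : ℝ, max ((b2+b3) - 2*(s1 x)) 0
        = (2/3) * max ((3*((b2+b3)/2 - 2/3)) - x) 0 := by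
      intro x
      rw [← mul_max0 (by norm_num : (0:ℝ) ≤ 2/3)]
      congr 1
      unfold s1
      ring
    simp_rw [hpt]
    rw [integral_const_mul, ← Wf_def]
    ring
  rw [hW]
  ring

omit h1 hm in
lemma Tbound {r e W : ℝ} (hr : 0 < r) (he0 : 0 ≤ e) (hWnn : 0 ≤ W) (hWle : W ≤ 3*r)
    (hK' : (6*r+1) * W ≤ 18*r^2 + 7/17496) :
    ((2*r+2*e+1/3)/3) * W ≤ (1/2)*(2*r+e)^2 + 7/157464 := by
  have hEW : e * W ≤ e * (3*r) := mul_le_mul_of_nonneg_left hWle he0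
  nlinarith [sq_nonneg e]

-- the main classification in the case b2 ≤ 1/2
set_option maxHeartbeats 1000000 in
theorem core {b1 b2 b3 : ℝ} (h12 : b1 ≤ b2) (h23 : b2 ≤ b3) (hb2 : b2 ≤ 1/2)
    (hE : E3 μ b1 b2 b3 ≤ 5/648) : b1 = 1/18 ∧ b2 = 5/18 ∧ b3 = 5/6 := by
  -- step 1 : 2/3 ≤ b3
  have hs1 : 2/3 ≤ b3 := by
    by_contra hcon
    push_neg at hcon
    have hpt : ∀ x ∈ J1, (x - b3)^2 ≤ e3 b1 b2 b3 x := by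
      intro x hx
      simp only [J1, mem_Icc] at hx
      exact le_min (le_min (q_mono (by linarith) (by linarith [hx.1]))
        (q_mono h23 (by linarith [hx.1]))) le_rfl
    have hmon : ∫ x in J1, (x - b3)^2 ∂μ ≤ ∫ x in J1, e3 b1 b2 b3 x ∂μ :=
      setIntegral_mono_on (hf := (integrable_cont h1 (by fun_prop)).integrableOn)
        (hg := (integrable_cont h1 (cont_e3 b1 b2 b3)).integrableOn) measurableSet_Icc hpt
    have hle := int_ge_setint h1 (cont_e3 b1 b2 b3) (e3_nonneg b1 b2 b3) J1
    rw [int_J1_q h1 hm b3] at hmon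
    have hsq : (1:ℝ)/36 ≤ (b3 - 5/6)^2 := by nlinarith
    have : (1:ℝ)/48 ≤ E3 μ b1 b2 b3 := by
      unfold E3
      linarith
    linarith
  -- step 2 : b1 ≤ 1/3
  have hs2 : b1 ≤ 1/3 := by
    by_contra hcon
    push_neg at hcon
    have hpt : ∀ x ∈ J0, (x - b1)^2 ≤ e3 b1 b2 b3 x := by
      intro x hx
      simp only [J0, mem_Icc] at hx
      exact le_min (le_min le_rfl (q_mono' h12 (by linarith [hx.2])))
        (q_mono' (by linarith) (by linarith [hx.2]))
    have hmon : ∫ x in J0, (x - b1)^2 ∂μ ≤ ∫ x in J0, e3 b1 b2 b3 x ∂μ :=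
      setIntegral_mono_on (hf := (integrable_cont h1 (by fun_prop)).integrableOn)
        (hg := (integrable_cont h1 (cont_e3 b1 b2 b3)).integrableOn) measurableSet_Icc hpt
    have hle := int_ge_setint h1 (cont_e3 b1 b2 b3) (e3_nonneg b1 b2 b3) J0
    rw [int_J0_q h1 hm b1] at hmon
    have hsq : (1:ℝ)/36 ≤ (b1 - 1/6)^2 := by nlinarith
    have : (1:ℝ)/48 ≤ E3 μ b1 b2 b3 := by
      unfold E3
      linarith
    linarith
  -- step 3 : 0 ≤ b2
  have hs3 : 0 ≤ b2 := by
    by_contra hcon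
    push_neg at hcon
    have hpt : ∀ x ∈ J0, (x - 0)^2 ≤ e3 b1 b2 b3 x := by
      intro x hx
      simp only [J0, mem_Icc] at hx
      exact le_min (le_min (q_mono (by linarith) (by linarith [hx.1]))
        (q_mono (by linarith) (by linarith [hx.1])))
        (q_mono' (by linarith) (by linarith [hx.2]))
    have hmon : ∫ x in J0, (x - 0)^2 ∂μ ≤ ∫ x in J0, e3 b1 b2 b3 x ∂μ :=
      setIntegral_mono_on (hf := (integrable_cont h1 (by fun_prop)).integrableOn)
        (hg := (integrable_cont h1 (cont_e3 b1 b2 b3)).integrableOn) measurableSet_Icc hpt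
    have hle := int_ge_setint h1 (cont_e3 b1 b2 b3) (e3_nonneg b1 b2 b3) J0
    rw [int_J0_q h1 hm 0] at hmon
    have : (1:ℝ)/48 ≤ E3 μ b1 b2 b3 := by
      unfold E3
      have : (1:ℝ)/144 + (1/2) * (0 - 1/6)^2 = 1/48 := by norm_num
      linarith
    linarith
  -- decomposition
  have hsplit := integral_split h1 hm (f := e3 b1 b2 b3) (cont_e3 b1 b2 b3)
  have hc0 : ∫ x in J0, e3 b1 b2 b3 x ∂μ
      = ∫ x in J0, min ((x-b1)^2) ((x-b2)^2) ∂μ := by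
    refine setIntegral_congr_fun measurableSet_Icc fun x hx => ?_
    simp only [J0, mem_Icc] at hx
    unfold e3
    refine min_eq_left (le_trans (min_le_right _ _) ?_)
    exact q_mono' h23 (by linarith [hx.2])
  have hscale : ∫ x in J0, min ((x-b1)^2) ((x-b2)^2) ∂μ = (1/18) * F2 μ (3*b1) (3*b2) := by
    rw [setint_J0 h1 hm (cont_min2 b1 b2)]
    have hpt : ∀ x : ℝ, min ((s0 x - b1)^2) ((s0 x - b2)^2)
        = (1/9) * min ((x - 3*b1)^2) ((x - 3*b2)^2) := by
      intro x
      unfold s0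
      rw [show (x/3 - b1)^2 = (1/9) * (x - 3*b1)^2 by ring,
        show (x/3 - b2)^2 = (1/9) * (x - 3*b2)^2 by ring]
      rcases le_total ((x - 3*b1)^2) ((x - 3*b2)^2) with h | h
      · rw [min_eq_left h, min_eq_left (by nlinarith)]
      · rw [min_eq_right h, min_eq_right (by nlinarith)]
    simp_rw [hpt]
    rw [integral_const_mul]
    show (1/2) * ((1/9) * F2 μ (3*b1) (3*b2)) = _
    ring
  have hc1 : ∫ x in J1, e3 b1 b2 b3 x ∂μ
      = ∫ x in J1, min ((x-b2)^2) ((x-b3)^2) ∂μ := by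
    refine setIntegral_congr_fun measurableSet_Icc fun x hx => ?_
    simp only [J1, mem_Icc] at hx
    unfold e3
    rw [min_eq_right (q_mono h12 (by linarith [hx.1]))]
  have hEeq : E3 μ b1 b2 b3 = (1/18) * F2 μ (3*b1) (3*b2)
      + ∫ x in J1, min ((x-b2)^2) ((x-b3)^2) ∂μ := by
    unfold E3
    rw [hsplit, hc0, hscale, hc1]
  have hF2lb := (F2_ge h1 hm (by linarith : 3*b1 ≤ 3*b2)).1
  -- case analysis on b2
  rcases le_or_gt b2 (1/3) with hb23 | hb23
  · -- b2 ≤ 1/3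
    rcases le_or_gt b3 (4/3 - b2) with hd | hd
    · -- m2 ≤ 2/3 : exact T value
      have hT := T_decomp h1 hm h23
      have hWz : Wf μ (3*((b2+b3)/2 - 2/3)) = 0 := Wf_zero h1 (by linarith)
      rw [hWz, mul_zero, sub_zero] at hT
      rw [hT] at hEeq
      -- forcing equalities
      have hsq := sq_nonneg (b3 - 5/6)
      have h0 : (b3 - 5/6)^2 = 0 := by linarith
      have hb3 : b3 = 5/6 := by
        have h4 := (pow_eq_zero_iff (by norm_num : (2:ℕ) ≠ 0)).mp h0
        linarith
      have hF2ub : F2 μ (3*b1) (3*b2) ≤ 1/72 := by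
        rw [h0] at hEeq
        linarith
      have hF2eq : F2 μ (3*b1) (3*b2) = 1/72 := le_antisymm hF2ub hF2lb
      obtain ⟨hx1, hx2⟩ := (F2_ge h1 hm (by linarith : 3*b1 ≤ 3*b2)).2 hF2eq
      exact ⟨by linarith, by linarith, hb3⟩
    · -- b3 > 4/3 - b2 ≥ 1 : contradiction
      exfalso
      have hb31 : (1:ℝ) ≤ b3 := by linarith
      have hpt : ∀ x ∈ J1, (x - 1)^2 ≤ min ((x-b2)^2) ((x-b3)^2) := by
        intro x hx
        simp only [J1, mem_Icc] at hx
        refine le_min ?_ (q_mono' hb31 (by linarith [hx.2]))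
        have h13 : (x - 1/3)^2 ≤ (x - b2)^2 := q_mono hb23 (by linarith [hx.1])
        nlinarith [hx.1, hx.2]
      have hmon : ∫ x in J1, (x - 1)^2 ∂μ ≤ ∫ x in J1, min ((x-b2)^2) ((x-b3)^2) ∂μ :=
        setIntegral_mono_on (hf := (integrable_cont h1 (by fun_prop)).integrableOn)
          (hg := (integrable_cont h1 (cont_min2 b2 b3)).integrableOn) measurableSet_Icc hpt
      rw [int_J1_q h1 hm 1] at hmon
      have hF2nn : (0:ℝ) ≤ F2 μ (3*b1) (3*b2) := by linarith
      have : (1:ℝ)/144 + (1/2) * (1 - 5/6)^2 = 1/48 := by norm_num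
      nlinarith
  · -- 1/3 < b2 ≤ 1/2 : contradiction via far lemma and K bound
    exfalso
    have hfar := F2_far h1 hm (u := 3*b1) (v := 3*b2) (by linarith)
    -- T lower bound
    have hT := T_decomp h1 hm h23
    have hTge : 1/144 - 7/157464 ≤ ∫ x in J1, min ((x-b2)^2) ((x-b3)^2) ∂μ := by
      rcases le_or_gt ((b2+b3)/2 - 2/3) 0 with hr | hr
      · have hWz : Wf μ (3*((b2+b3)/2 - 2/3)) = 0 := Wf_zero h1 (by linarith)
        rw [hT, hWz, mul_zero, sub_zero]
        nlinarith [sq_nonneg (b3 - 5/6)]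
      · have hK := K_le h1 hm (3*((b2+b3)/2 - 2/3)) (by linarith)
        have hWle : Wf μ (3*((b2+b3)/2 - 2/3)) ≤ 3*((b2+b3)/2 - 2/3) :=
          Wf_le h1 (by linarith)
        have hWnn : 0 ≤ Wf μ (3*((b2+b3)/2 - 2/3)) := Wf_nonneg (μ := μ) _
        have hK' : (6*((b2+b3)/2 - 2/3)+1) * Wf μ (3*((b2+b3)/2 - 2/3))
            ≤ 18*((b2+b3)/2 - 2/3)^2 + 7/17496 := by nlinarith [hK]
        have hgoal := Tbound hr (show (0:ℝ) ≤ 1/2 - b2 by linarith) hWnn hWle hK'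
        have hb3r : b3 - 5/6 = 2*((b2+b3)/2 - 2/3) + (1/2 - b2) := by ring
        have hb3b2 : (b3-b2)/3 = (2*((b2+b3)/2 - 2/3)+2*(1/2 - b2)+1/3)/3 := by ring
        rw [hT]
        rw [hb3r, hb3b2]
        linarith [hgoal]
    rw [hEeq] at hE
    nlinarith

-- value of the candidate set
lemma E3_A1 : E3 μ (1/18) (5/18) (5/6) = 5/648 := by
  have hsplit := integral_split h1 hm (f := e3 (1/18) (5/18) (5/6)) (cont_e3 _ _ _)
  have hc0 : ∫ x in J0, e3 (1/18) (5/18) (5/6) x ∂μ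
      = ∫ x in J0, min ((x-(1/18))^2) ((x-(5/18))^2) ∂μ := by
    refine setIntegral_congr_fun measurableSet_Icc fun x hx => ?_
    simp only [J0, mem_Icc] at hx
    unfold e3
    refine min_eq_left (le_trans (min_le_right _ _) ?_)
    exact q_mono' (by norm_num) (by linarith [hx.2])
  have hscale : ∫ x in J0, min ((x-(1/18:ℝ))^2) ((x-(5/18:ℝ))^2) ∂μ
      = (1/18) * F2 μ (1/6) (5/6) := by
    rw [setint_J0 h1 hm (cont_min2 _ _)]
    have hpt : ∀ x : ℝ, min ((s0 x - (1/18:ℝ))^2) ((s0 x - (5/18:ℝ))^2)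
        = (1/9) * min ((x - 1/6)^2) ((x - 5/6)^2) := by
      intro x
      unfold s0
      rw [show (x/3 - (1/18:ℝ))^2 = (1/9) * (x - 1/6)^2 by ring,
        show (x/3 - (5/18:ℝ))^2 = (1/9) * (x - 5/6)^2 by ring]
      rcases le_total ((x - 1/6)^2) ((x - 5/6)^2) with h | h
      · rw [min_eq_left h, min_eq_left (by nlinarith)]
      · rw [min_eq_right h, min_eq_right (by nlinarith)]
    simp_rw [hpt]
    rw [integral_const_mul]
    show (1/2) * ((1/9) * F2 μ (1/6) (5/6)) = _
    ring
  have hF2val : F2 μ (1/6) (5/6) = 1/72 := by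
    have hsplit2 := integral_split h1 hm
      (f := fun x => min ((x-(1/6:ℝ))^2) ((x-(5/6:ℝ))^2)) (cont_min2 _ _)
    have ha : ∫ x in J0, min ((x-(1/6:ℝ))^2) ((x-(5/6:ℝ))^2) ∂μ
        = ∫ x in J0, (x - (1/6:ℝ))^2 ∂μ := by
      refine setIntegral_congr_fun measurableSet_Icc fun x hx => ?_
      simp only [J0, mem_Icc] at hx
      exact min_eq_left (q_mono' (by norm_num) (by linarith [hx.2]))
    have hb : ∫ x in J1, min ((x-(1/6:ℝ))^2) ((x-(5/6:ℝ))^2) ∂μ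
        = ∫ x in J1, (x - (5/6:ℝ))^2 ∂μ := by
      refine setIntegral_congr_fun measurableSet_Icc fun x hx => ?_
      simp only [J1, mem_Icc] at hx
      exact min_eq_right (q_mono (by norm_num) (by linarith [hx.1]))
    show (∫ x, min ((x-(1/6:ℝ))^2) ((x-(5/6:ℝ))^2) ∂μ) = 1/72
    rw [hsplit2, ha, hb, int_J0_q h1 hm (1/6), int_J1_q h1 hm (5/6)]
    norm_num
  have hc1 : ∫ x in J1, e3 (1/18) (5/18) (5/6) x ∂μ = ∫ x in J1, (x - (5/6:ℝ))^2 ∂μ := by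
    refine setIntegral_congr_fun measurableSet_Icc fun x hx => ?_
    simp only [J1, mem_Icc] at hx
    unfold e3
    refine min_eq_right (le_min ?_ ?_)
    · exact q_mono (by norm_num) (by linarith [hx.1])
    · exact q_mono (by norm_num) (by linarith [hx.1])
  unfold E3
  rw [hsplit, hc0, hscale, hF2val, hc1, int_J1_q h1 hm (5/6)]
  norm_num


end S7

section S8
lemma sum_shift (G : ℕ → Measure ℝ)
    (hGs : ∀ (j : ℕ) (s : Set ℝ), MeasurableSet s → G (j+1) s = 2⁻¹ * G j (s1 ⁻¹' s)) :
    Measure.sum G = G 0 + (2:ℝ≥0∞)⁻¹ • (Measure.sum G).map s1 := by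
  ext s hs
  rw [Measure.add_apply, Measure.smul_apply, Measure.map_apply s1_meas hs,
    Measure.sum_apply G hs, Measure.sum_apply G (s1_meas hs), smul_eq_mul,
    tsum_eq_zero_add' ENNReal.summable, ← ENNReal.tsum_mul_left]
  congr 1
  exact tsum_congr fun j => hGs j s hs

lemma selfsim_two (P : Measure ℝ) (hself : SelfSim P) :
    P = (2:ℝ≥0∞)⁻¹ • P.map s0 + (2:ℝ≥0∞)⁻¹ • P.map s1 := by
  have hSmeas : ∀ j, Measurable (Smap j) := by
    intro j
    unfold Smap
    fun_prop
  have hs0 : Smap 1 = s0 := by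
    funext x
    simp [Smap, s0]
  have hcomp : ∀ j : ℕ, Smap (j+2) = s1 ∘ Smap (j+1) := by
    intro j
    funext x
    simp only [Smap, s1, Function.comp_apply]
    have e1 : j + 2 - 1 = j + 1 := by omega
    have e2 : j + 1 - 1 = j := by omega
    rw [e1, e2]
    have h1 : (3:ℝ)^(j+2) = 3^(j+1)*3 := by ring
    have h2 : (3:ℝ)^(j+1) = 3^j*3 := by ring
    have h3 : (3:ℝ)^j ≠ 0 := by positivity
    field_simp
    ring
  have hcoef : ∀ j : ℕ, ((2:ℝ≥0∞)^(j+2))⁻¹ = 2⁻¹ * ((2:ℝ≥0∞)^(j+1))⁻¹ := by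
    intro j
    rw [pow_succ, mul_comm]
    rw [ENNReal.mul_inv (Or.inl (by norm_num)) (Or.inl (by norm_num))]
  have hFs : ∀ (j : ℕ) (s : Set ℝ), MeasurableSet s →
      (((2:ℝ≥0∞)^(j+1+1))⁻¹ • P.map (Smap (j+1+1))) s
        = 2⁻¹ * (((2:ℝ≥0∞)^(j+1))⁻¹ • P.map (Smap (j+1))) (s1 ⁻¹' s) := by
    intro j s hs
    simp only [Measure.smul_apply, smul_eq_mul]
    rw [Measure.map_apply (hSmeas _) hs, Measure.map_apply (hSmeas _) (s1_meas hs)]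
    rw [show j + 1 + 1 = j + 2 from rfl, hcomp j, Set.preimage_comp, hcoef j]
    ring
  have key := sum_shift (fun j => ((2:ℝ≥0∞)^(j+1))⁻¹ • P.map (Smap (j+1))) hFs
  calc P = Measure.sum (fun j : ℕ => ((2:ℝ≥0∞)^(j+1))⁻¹ • P.map (Smap (j+1))) := hself
    _ = ((2:ℝ≥0∞)^(0+1))⁻¹ • P.map (Smap (0+1))
        + (2:ℝ≥0∞)⁻¹ • (Measure.sum (fun j : ℕ => ((2:ℝ≥0∞)^(j+1))⁻¹ • P.map (Smap (j+1)))).map s1 := key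
    _ = (2:ℝ≥0∞)⁻¹ • P.map s0 + (2:ℝ≥0∞)⁻¹ • P.map s1 := by
        rw [← hself]
        congr 1
        rw [show (0:ℕ)+1 = 1 from rfl, hs0, pow_one]

def rr (x : ℝ) : ℝ := 1 - x
lemma rr_meas : Measurable rr := by unfold rr; fun_prop

lemma mirror_h1 (P : Measure ℝ) (h1 : P (Icc (0:ℝ) 1) = 1) :
    (P.map rr) (Icc (0:ℝ) 1) = 1 := by
  rw [Measure.map_apply rr_meas measurableSet_Icc]
  have : rr ⁻¹' (Icc (0:ℝ) 1) = Icc 0 1 := by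
    ext x
    simp only [rr, mem_preimage, mem_Icc]
    constructor <;> rintro ⟨a, b⟩ <;> constructor <;> linarith
  rw [this, h1]

lemma mirror_hm (P : Measure ℝ)
    (hm : P = (2:ℝ≥0∞)⁻¹ • P.map s0 + (2:ℝ≥0∞)⁻¹ • P.map s1) :
    P.map rr = (2:ℝ≥0∞)⁻¹ • (P.map rr).map s0 + (2:ℝ≥0∞)⁻¹ • (P.map rr).map s1 := by
  have c0 : (P.map rr).map s0 = (P.map s1).map rr := by
    rw [Measure.map_map s0_meas rr_meas, Measure.map_map rr_meas s1_meas]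
    congr 1
    funext x
    simp only [Function.comp_apply, s0, s1, rr]
    ring
  have c1 : (P.map rr).map s1 = (P.map s0).map rr := by
    rw [Measure.map_map s1_meas rr_meas, Measure.map_map rr_meas s0_meas]
    congr 1
    funext x
    simp only [Function.comp_apply, s0, s1, rr]
    ring
  calc P.map rr
      = ((2:ℝ≥0∞)⁻¹ • P.map s0 + (2:ℝ≥0∞)⁻¹ • P.map s1).map rr :=
        congrArg (fun m : Measure ℝ => m.map rr) hm
    _ = (2:ℝ≥0∞)⁻¹ • (P.map s0).map rr + (2:ℝ≥0∞)⁻¹ • (P.map s1).map rr := by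
        rw [Measure.map_add _ _ rr_meas, Measure.map_smul, Measure.map_smul]
    _ = (2:ℝ≥0∞)⁻¹ • (P.map rr).map s0 + (2:ℝ≥0∞)⁻¹ • (P.map rr).map s1 := by
        rw [c0, c1, add_comm]

lemma E3_mirror (P : Measure ℝ) [IsProbabilityMeasure P] (b1 b2 b3 : ℝ) :
    E3 (P.map rr) (1-b3) (1-b2) (1-b1) = E3 P b1 b2 b3 := by
  unfold E3
  rw [integral_map rr_meas.aemeasurable (cont_e3 _ _ _).aestronglyMeasurable]
  congr 1
  funext x
  unfold e3 rr
  rw [show (1 - x - (1-b3))^2 = (x - b3)^2 by ring,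
    show (1 - x - (1-b2))^2 = (x - b2)^2 by ring,
    show (1 - x - (1-b1))^2 = (x - b1)^2 by ring]
  rw [min_comm ((x-b3)^2) ((x-b2)^2), min_assoc, min_comm ((x-b3)^2) ((x-b1)^2),
    ← min_assoc, min_comm ((x-b2)^2) ((x-b1)^2)]

lemma err_eq_E3 (P : Measure ℝ) (p q r : ℝ) : err P {p, q, r} = E3 P p q r := by
  unfold err E3
  congr 1
  funext x
  have himg : (fun a => (x - a)^2) '' {p, q, r}
      = {(x-p)^2, (x-q)^2, (x-r)^2} := by
    simp [Set.image_insert_eq]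
  rw [himg]
  have hbdd : BddBelow ({(x-q)^2, (x-r)^2} : Set ℝ) :=
    ((Set.finite_singleton _).insert _).bddBelow
  rw [show ({(x-p)^2, (x-q)^2, (x-r)^2} : Set ℝ)
      = insert ((x-p)^2) {(x-q)^2, (x-r)^2} from rfl]
  rw [csInf_insert hbdd (Set.insert_nonempty _ _), csInf_pair]
  unfold e3
  rw [min_assoc]

lemma rep3 {A : Set ℝ} (hf : A.Finite) (hn : A.Nonempty) (hc : A.ncard ≤ 3) :
    ∃ p q r : ℝ, p ≤ q ∧ q ≤ r ∧ A = {p, q, r} := by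
  have hpos : 0 < A.ncard := (Set.ncard_pos hf).2 hn
  have h123 : A.ncard = 1 ∨ A.ncard = 2 ∨ A.ncard = 3 := by omega
  rcases h123 with h | h | h
  · obtain ⟨a, rfl⟩ := Set.ncard_eq_one.mp h
    exact ⟨a, a, a, le_rfl, le_rfl, by
      ext t; simp only [mem_insert_iff, mem_singleton_iff]; try tauto⟩
  · obtain ⟨x, y, hxy, rfl⟩ := Set.ncard_eq_two.mp h
    rcases le_total x y with hl | hl
    · exact ⟨x, x, y, le_rfl, hl, by
        ext t; simp only [mem_insert_iff, mem_singleton_iff]; try tauto⟩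
    · exact ⟨y, y, x, le_rfl, hl, by
        ext t; simp only [mem_insert_iff, mem_singleton_iff]; try tauto⟩
  · obtain ⟨x, y, z, hxy, hxz, hyz, rfl⟩ := Set.ncard_eq_three.mp h
    rcases le_total x y with h1 | h1 <;> rcases le_total y z with h2 | h2 <;>
      rcases le_total x z with h3 | h3
    · exact ⟨x, y, z, h1, h2, by
        ext t; simp only [mem_insert_iff, mem_singleton_iff]; try tauto⟩
    · exact ⟨x, y, z, h1, h2, by
        ext t; simp only [mem_insert_iff, mem_singleton_iff]; try tauto⟩
    · exact ⟨x, z, y, h3, h2, by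
        ext t; simp only [mem_insert_iff, mem_singleton_iff]; try tauto⟩
    · exact ⟨z, x, y, h3, h1, by
        ext t; simp only [mem_insert_iff, mem_singleton_iff]; try tauto⟩
    · exact ⟨y, x, z, h1, h3, by
        ext t; simp only [mem_insert_iff, mem_singleton_iff]; try tauto⟩
    · exact ⟨y, z, x, h2, h3, by
        ext t; simp only [mem_insert_iff, mem_singleton_iff]; try tauto⟩
    · exact ⟨z, y, x, h2, h1, by
        ext t; simp only [mem_insert_iff, mem_singleton_iff]; try tauto⟩
    · exact ⟨z, y, x, h2, h1, by
        ext t; simp only [mem_insert_iff, mem_singleton_iff]; try tauto⟩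


end S8

end CQ

theorem optimal_three_means (P : Measure ℝ) [IsProbabilityMeasure P]
    (hsupp : P (Set.Icc 0 1) = 1) (hself : SelfSim P) (α : Set ℝ) (hα : IsOptimal P 3 α) :
    (α = {1 / 18, 5 / 18, 5 / 6} ∨ α = {1 / 6, 13 / 18, 17 / 18}) ∧
    quantErr P 3 = 5 / 648 := by
  obtain ⟨hfin, hne, hcard, hopt⟩ := hα
  have hm := CQ.selfsim_two P hself
  haveI hPrr : IsProbabilityMeasure (P.map CQ.rr) :=
    Measure.isProbabilityMeasure_map CQ.rr_meas.aemeasurable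
  have h1' := CQ.mirror_h1 P hsupp
  have hm' := CQ.mirror_hm P hm
  have hclass : ∀ A : Set ℝ, A.Finite → A.Nonempty → A.ncard ≤ 3 → err P A ≤ 5/648 →
      A = ({1/18, 5/18, 5/6} : Set ℝ) ∨ A = ({1/6, 13/18, 17/18} : Set ℝ) := by
    intro A hf hn hc hle
    obtain ⟨p, q, r, hpq, hqr, hrep⟩ := CQ.rep3 hf hn hc
    rw [hrep, CQ.err_eq_E3] at hle
    rcases le_or_gt q (1/2) with hq | hq
    · obtain ⟨e1, e2, e3⟩ := CQ.core hsupp hm hpq hqr hq hle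
      left
      rw [hrep, e1, e2, e3]
    · have hmir := CQ.E3_mirror P p q r
      have hres := CQ.core h1' hm'
        (show (1:ℝ) - r ≤ 1 - q by linarith) (show (1:ℝ) - q ≤ 1 - p by linarith)
        (show (1:ℝ) - q ≤ 1/2 by linarith) (by rw [hmir]; exact hle)
      obtain ⟨f1, f2, f3⟩ := hres
      right
      have hp : p = 1/6 := by linarith
      have hq2 : q = 13/18 := by linarith
      have hr : r = 17/18 := by linarith
      rw [hrep, hp, hq2, hr]
  have hA1err : err P ({1/18, 5/18, 5/6} : Set ℝ) = 5/648 := by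
    rw [CQ.err_eq_E3]
    exact CQ.E3_A1 hsupp hm
  have hA2err : err P ({1/6, 13/18, 17/18} : Set ℝ) = 5/648 := by
    rw [CQ.err_eq_E3]
    have hmir := CQ.E3_mirror P (1/6) (13/18) (17/18)
    rw [← hmir]
    norm_num
    have := CQ.E3_A1 h1' hm'
    norm_num at this
    exact this
  have hA1fin : ({1/18, 5/18, 5/6} : Set ℝ).Finite :=
    ((Set.finite_singleton _).insert _).insert _
  have hA1ne : ({1/18, 5/18, 5/6} : Set ℝ).Nonempty := ⟨1/18, by simp⟩
  have hA1card : ({1/18, 5/18, 5/6} : Set ℝ).ncard ≤ 3 := by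
    have c1 := Set.ncard_insert_le (1/18:ℝ) {5/18, 5/6}
    have c2 := Set.ncard_insert_le (5/18:ℝ) {5/6}
    have c3 : ({5/6} : Set ℝ).ncard = 1 := Set.ncard_singleton _
    omega
  have hmem : (5/648 : ℝ) ∈ {v | ∃ A : Set ℝ, A.Finite ∧ A.Nonempty ∧ A.ncard ≤ 3 ∧ v = err P A} :=
    ⟨{1/18, 5/18, 5/6}, hA1fin, hA1ne, hA1card, hA1err.symm⟩
  have hlb : ∀ v ∈ {v | ∃ A : Set ℝ, A.Finite ∧ A.Nonempty ∧ A.ncard ≤ 3 ∧ v = err P A},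
      (5/648:ℝ) ≤ v := by
    rintro v ⟨A, hf, hn, hc, rfl⟩
    by_contra hcon
    push_neg at hcon
    rcases hclass A hf hn hc (le_of_lt hcon) with h | h
    · rw [h, hA1err] at hcon; linarith
    · rw [h, hA2err] at hcon; linarith
  have hq3 : quantErr P 3 = 5/648 := by
    unfold quantErr
    exact le_antisymm (csInf_le ⟨5/648, fun v hv => hlb v hv⟩ hmem) (le_csInf ⟨_, hmem⟩ hlb)
  refine ⟨?_, hq3⟩
  have herr : err P α ≤ 5/648 := by rw [hopt, hq3]
  exact hclass α hfin hne hcard herr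


end
end
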